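/- arXiv:1808.09678 — 4 statements merged into one kernel-verified Lean document; each statement's English description precedes it below -/
import Mathlib

section
/- Under condition (T), for every coordinate i ∈ {1, …, d} and every α with 0 < α < α̃_i, the stationary solution satisfies E[W_i^α] < ∞. -/
open MeasureTheory ProbabilityTheory Filter Matrix Set
open scoped ENNReal Topology

namespace TriSRE

variable {Ω : Type*} [MeasurableSpace Ω]

/-- Condition (T) of Matsui–Świątkowski for a random matrix `A` and random vector `B`,
with tail indices `α`. -/
structure CondT {d : ℕ} (μ : Measure Ω)
    (A : Ω → Matrix (Fin d) (Fin d) ℝ) (B : Ω → Fin d → ℝ) (α : Fin d → ℝ) : Prop where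
  measA : ∀ i j, Measurable fun ω => A ω i j
  measB : ∀ i, Measurable fun ω => B ω i
  /-- (T-1) nonnegative entries -/
  nonnegA : ∀ i j, ∀ᵐ ω ∂μ, 0 ≤ A ω i j
  nonnegB : ∀ i, ∀ᵐ ω ∂μ, 0 ≤ B ω i
  /-- (T-2) -/
  B_ne_zero : ∀ i, μ {ω | B ω i = 0} < 1
  /-- (T-3) upper triangular -/
  upperTriangular : ∀ i j, j < i → ∀ᵐ ω ∂μ, A ω i j = 0
  /-- (T-4) -/
  alpha_pos : ∀ i, 0 < α i
  alpha_injective : ∀ i j, i ≠ j → α i ≠ α j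
  diag_moment_one : ∀ i, ∫ ω, A ω i i ^ α i ∂μ = 1
  /-- (T-5) -/
  A_moment : ∀ i j, Integrable (fun ω => A ω i j ^ α i) μ
  /-- (T-6) -/
  B_moment : ∀ i, Integrable (fun ω => B ω i ^ α i) μ
  /-- (T-7) -/
  log_moment : ∀ i, Integrable (fun ω => A ω i i ^ α i * max (Real.log (A ω i i)) 0) μ
  /-- (T-8) the conditional law of `log A i i` on `{A i i > 0}` is non-arithmetic,
  i.e. not concentrated on any lattice `c ℤ`. -/
  nonarithmetic : ∀ i, ∀ c : ℝ,
    μ {ω | 0 < A ω i i ∧ ∀ k : ℤ, Real.log (A ω i i) ≠ c * k} ≠ 0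

/-- `i ⪯ j` : `i` directly depends on `j` (the entry `A i j` is positive with
positive probability). -/
def DirectDep {d : ℕ} (μ : Measure Ω) (A : Ω → Matrix (Fin d) (Fin d) ℝ)
    (i j : Fin d) : Prop :=
  0 < μ {ω | 0 < A ω i j}

/-- `i ⊴ j` : `i` depends on `j` (a chain of direct dependencies from `i` to `j`). -/
def Dep {d : ℕ} (μ : Measure Ω) (A : Ω → Matrix (Fin d) (Fin d) ℝ) :
    Fin d → Fin d → Prop :=
  Relation.ReflTransGen (DirectDep μ A)

/-- the modified tail index `α̃ i = min {α j : i ⊴ j}`. -/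
noncomputable def tildeAlpha {d : ℕ} (μ : Measure Ω) (A : Ω → Matrix (Fin d) (Fin d) ℝ)
    (α : Fin d → ℝ) (i : Fin d) : ℝ :=
  sInf {a : ℝ | ∃ j, Dep μ A i j ∧ a = α j}

section Aux
variable {Ω : Type*} [MeasurableSpace Ω]

/-- Abstract recursion lemma. -/
lemma key_recursion (F : ℝ → ℝ) (hF0 : ∀ s, 0 ≤ F s) (ρ K : ℝ)
    (hρ0 : 0 < ρ) (hρ1 : ρ < 1) (hK : 0 ≤ K)
    (hrec : ∀ s, 0 < s → F s ≤ ρ * F (s / ρ) + K)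
    (hsmall : ∀ ε, 0 < ε → ∃ s₁, ∀ s, s₁ ≤ s → F s ≤ ε * s) :
    ∀ s, 0 < s → F s ≤ K / (1 - ρ) := by
  intro s₀ hs₀
  by_contra hcon
  push_neg at hcon
  set C := K / (1 - ρ) with hC
  have hCnn : 0 ≤ C := div_nonneg hK (by linarith)
  set η := F s₀ - C with hη
  have hηpos : 0 < η := by simp [hη]; linarith
  have hind : ∀ n : ℕ, C + η / ρ ^ n ≤ F (s₀ / ρ ^ n) := by
    intro n
    induction n with
    | zero => simp [hη]
    | succ n ih =>
      have hsn : 0 < s₀ / ρ ^ n := div_pos hs₀ (pow_pos hρ0 n)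
      have h1 := hrec _ hsn
      have h2 : (F (s₀ / ρ ^ n) - K) / ρ ≤ F (s₀ / ρ ^ n / ρ) := by
        rw [div_le_iff₀ hρ0]
        linarith [h1]
      have h3 : s₀ / ρ ^ n / ρ = s₀ / ρ ^ (n + 1) := by
        rw [div_div, pow_succ]
      rw [h3] at h2
      refine le_trans ?_ h2
      rw [le_div_iff₀ hρ0]
      have hCeq : C * (1 - ρ) = K := by
        rw [hC]; field_simp
        rw [mul_div_assoc, div_self (by linarith : (1:ℝ) - ρ ≠ 0), mul_one]
      have hpow : η / ρ ^ (n+1) * ρ = η / ρ ^ n := by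
        rw [pow_succ]; field_simp
      nlinarith [pow_pos hρ0 n, pow_pos hρ0 (n+1)]
  obtain ⟨s₁, hs₁⟩ := hsmall (η / (2 * s₀)) (by positivity)
  -- choose n with s₀ / ρ ^ n ≥ max s₁ s₀
  obtain ⟨n, hn⟩ := exists_pow_lt_of_lt_one (x := s₀ / max s₁ s₀) (y := ρ)
    (div_pos hs₀ (lt_max_of_lt_right hs₀)) hρ1
  have hsn : max s₁ s₀ ≤ s₀ / ρ ^ n := by
    rw [le_div_iff₀ (pow_pos hρ0 n)]
    refine le_of_lt ?_
    calc max s₁ s₀ * ρ ^ n < max s₁ s₀ * (s₀ / max s₁ s₀) :=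
          (mul_lt_mul_iff_right₀ (lt_max_of_lt_right hs₀)).2 hn
      _ = s₀ := by field_simp
  have h4 := hs₁ _ (le_trans (le_max_left _ _) hsn)
  have h5 := hind n
  have h6 : η / (2 * s₀) * (s₀ / ρ ^ n) = η / ρ ^ n / 2 := by
    field_simp
  rw [h6] at h4
  have h7 : 0 < η / ρ ^ n := by positivity
  linarith [h5, h4, hCnn]

/-- strict weighted AM-GM with one value 1 -/
lemma amgm_aux {x θ : ℝ} (hx : 0 ≤ x) (hθ0 : 0 < θ) (hθ1 : θ < 1) :
    x ^ θ ≤ θ * x + (1 - θ) ∧ (x ≠ 1 → x ^ θ < θ * x + (1 - θ)) := by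
  rcases eq_or_lt_of_le hx with h0 | hxpos
  · rw [← h0, Real.zero_rpow hθ0.ne']
    constructor
    · linarith
    · intro _; linarith
  rcases eq_or_ne x 1 with rfl | hne
  · simp
  have hlog : Real.log x ≠ 0 :=
    Real.log_ne_zero_of_pos_of_ne_one hxpos hne
  have hkey : x ^ θ < θ * x + (1 - θ) := by
    have := strictConvexOn_exp.2 (Set.mem_univ (Real.log x)) (Set.mem_univ 0)
      hlog hθ0 (by linarith : (0:ℝ) < 1 - θ) (by ring)
    simp only [smul_eq_mul, mul_zero, add_zero, Real.exp_zero, mul_one] at this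
    rw [Real.rpow_def_of_pos hxpos, mul_comm (Real.log x) θ]
    rw [Real.exp_log hxpos] at this
    linarith
  exact ⟨hkey.le, fun _ => hkey⟩

/-- If `f ≥ 0`, `∫ f^α = 1`, `f` is not a.e. equal to 1, then `∫ f^a < 1` for `0 < a < α`,
and all relevant integrability facts. -/
lemma contraction (μ : Measure Ω) [IsProbabilityMeasure μ]
    {f : Ω → ℝ} (hmeas : Measurable f) (hnn : ∀ᵐ ω ∂μ, 0 ≤ f ω)
    {α a : ℝ} (ha : 0 < a) (haα : a < α)
    (hint : Integrable (fun ω => f ω ^ α) μ)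
    (hmom : ∫ ω, f ω ^ α ∂μ = 1)
    (hne : μ {ω | f ω ≠ 1} ≠ 0) :
    Integrable (fun ω => f ω ^ a) μ ∧ ∫ ω, f ω ^ a ∂μ < 1 := by
  have hα : 0 < α := ha.trans haα
  set θ := a / α with hθ
  have hθ0 : 0 < θ := div_pos ha hα
  have hθ1 : θ < 1 := (div_lt_one hα).2 haα
  set g := fun ω => θ * f ω ^ α + (1 - θ) with hg
  have hgint : Integrable g μ := (hint.const_mul θ).add (integrable_const _)
  have hbound : ∀ᵐ ω ∂μ, f ω ^ a ≤ g ω := by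
    filter_upwards [hnn] with ω hω
    have hid : f ω ^ a = (f ω ^ α) ^ θ := by
      rw [← Real.rpow_mul hω]
      congr 1
      rw [hθ]
      field_simp
    rw [hid]
    exact (amgm_aux (Real.rpow_nonneg hω α) hθ0 hθ1).1
  have hfaint : Integrable (fun ω => f ω ^ a) μ := by
    refine Integrable.mono' hgint
      (((Real.continuous_rpow_const ha.le).measurable.comp hmeas).aestronglyMeasurable) ?_
    filter_upwards [hbound, hnn] with ω h1 h2
    rw [Real.norm_eq_abs, abs_of_nonneg (Real.rpow_nonneg h2 a)]
    exact h1
  refine ⟨hfaint, ?_⟩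
  have hgle : ∫ ω, g ω ∂μ = 1 := by
    rw [hg]
    rw [integral_add (hint.const_mul θ) (integrable_const _), integral_const_mul, hmom,
      integral_const]
    simp
  have hle : ∫ ω, f ω ^ a ∂μ ≤ 1 := by
    rw [← hgle]
    exact integral_mono_ae hfaint hgint hbound
  rcases lt_or_eq_of_le hle with h | heq
  · exact h
  exfalso
  -- equality forces f = 1 a.e.
  have hdiff : ∫ ω, (g ω - f ω ^ a) ∂μ = 0 := by
    rw [integral_sub hgint hfaint, hgle, heq, sub_self]
  have hdnn : 0 ≤ᵐ[μ] fun ω => g ω - f ω ^ a := by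
    filter_upwards [hbound] with ω h; simpa using h
  have hzero : (fun ω => g ω - f ω ^ a) =ᵐ[μ] 0 :=
    (integral_eq_zero_iff_of_nonneg_ae hdnn (hgint.sub hfaint)).1 hdiff
  have hf1 : ∀ᵐ ω ∂μ, f ω = 1 := by
    filter_upwards [hzero, hnn] with ω h0 hω
    have h0' : θ * f ω ^ α + (1 - θ) - f ω ^ a = 0 := h0
    have hid : f ω ^ a = (f ω ^ α) ^ θ := by
      rw [← Real.rpow_mul hω]; congr 1; rw [hθ]; field_simp
    have heqq : (f ω ^ α) ^ θ = θ * f ω ^ α + (1 - θ) := by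
      rw [← hid]; linarith [h0']
    by_contra hfne
    have hxne : f ω ^ α ≠ 1 := by
      intro hc
      apply hfne
      calc f ω = f ω ^ (α * (1/α)) := by
              rw [mul_one_div, div_self hα.ne', Real.rpow_one]
        _ = (f ω ^ α) ^ (1/α) := Real.rpow_mul hω α (1/α)
        _ = 1 := by rw [hc, Real.one_rpow]
    exact absurd heqq (ne_of_lt ((amgm_aux (Real.rpow_nonneg hω α) hθ0 hθ1).2 hxne))
  exact hne (ae_iff.1 hf1)

lemma min_add_le (x y c : ℝ≥0∞) : min (x + y) c ≤ min x c + y := by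
  rcases le_total x c with h | h
  · calc min (x+y) c ≤ x + y := min_le_left _ _
      _ = min x c + y := by rw [min_eq_left h]
  · calc min (x+y) c ≤ c := min_le_right _ _
      _ ≤ min x c + y := by rw [min_eq_right h]; exact le_self_add

lemma mul_min' (r x c : ℝ≥0∞) (hr0 : r ≠ 0) (hrt : r ≠ ∞) :
    min (r * x) c = r * min x (c / r) := by
  have hmul : ∀ u v : ℝ≥0∞, r * min u v = min (r * u) (r * v) :=
    fun u v => (Monotone.map_min (f := fun t => r * t)
      (fun s t h => mul_le_mul_right h r))
  rw [hmul, ENNReal.mul_div_cancel hr0 hrt]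

lemma lintegral_min_le_min (μ : Measure Ω) [IsProbabilityMeasure μ]
    (f : Ω → ℝ≥0∞) (c : ℝ≥0∞) :
    ∫⁻ ω, min (f ω) c ∂μ ≤ min (∫⁻ ω, f ω ∂μ) c := by
  refine le_min (lintegral_mono fun ω => min_le_left _ _) ?_
  calc ∫⁻ ω, min (f ω) c ∂μ ≤ ∫⁻ _, c ∂μ := lintegral_mono fun ω => min_le_right _ _
    _ = c := by simp

/-- independence bound : `∫ min (U·V) c ≤ ∫ min ((∫U)·V) c`. -/
lemma indep_min_bound (μ : Measure Ω) [IsProbabilityMeasure μ]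
    {U V : Ω → ℝ≥0∞} (hU : Measurable U) (hV : Measurable V)
    (hind : IndepFun U V μ) (c : ℝ≥0∞) :
    ∫⁻ ω, min (U ω * V ω) c ∂μ ≤ ∫⁻ ω, min ((∫⁻ ω', U ω' ∂μ) * V ω) c ∂μ := by
  set r := ∫⁻ ω', U ω' ∂μ with hr
  have hmap : μ.map (fun ω => (V ω, U ω)) = (μ.map V).prod (μ.map U) :=
    (indepFun_iff_map_prod_eq_prod_map_map hV.aemeasurable hU.aemeasurable).1 hind.symm
  have hprobU : IsProbabilityMeasure (μ.map U) := Measure.isProbabilityMeasure_map hU.aemeasurable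
  have hprobV : IsProbabilityMeasure (μ.map V) := Measure.isProbabilityMeasure_map hV.aemeasurable
  have hmeas2 : Measurable (fun p : ℝ≥0∞ × ℝ≥0∞ => min (p.2 * p.1) c) :=
    ((measurable_snd.mul measurable_fst).min measurable_const)
  have h1 : ∫⁻ ω, min (U ω * V ω) c ∂μ
      = ∫⁻ p, min (p.2 * p.1) c ∂((μ.map V).prod (μ.map U)) := by
    rw [← hmap, lintegral_map hmeas2 (hV.prodMk hU)]
  rw [h1, lintegral_prod _ hmeas2.aemeasurable]
  have h2 : ∫⁻ ω, min (r * V ω) c ∂μ = ∫⁻ v, min (r * v) c ∂(μ.map V) := by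
    rw [lintegral_map (by fun_prop : Measurable fun v : ℝ≥0∞ => min (r * v) c) hV]
  rw [h2]
  refine lintegral_mono fun v => ?_
  calc ∫⁻ u, min (u * v) c ∂(μ.map U) ≤ min (∫⁻ u, u * v ∂(μ.map U)) c :=
        lintegral_min_le_min _ _ _
    _ = min (r * v) c := by
        have h3 : ∫⁻ u, u * v ∂(μ.map U) = (∫⁻ u, u ∂(μ.map U)) * v :=
          lintegral_mul_const v measurable_id
        have h4 : ∫⁻ u, u ∂(μ.map U) = r := by
          rw [lintegral_map (f := fun x : ℝ≥0∞ => x) measurable_id' hU, hr]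
        rw [h3, h4]

lemma lintegral_min_le_tail (μ : Measure Ω) [IsProbabilityMeasure μ]
    {Y : Ω → ℝ≥0∞} (hY : Measurable Y) (c M : ℝ≥0∞) :
    ∫⁻ ω, min (Y ω) c ∂μ ≤ M + c * μ {ω | M < Y ω} := by
  have hset : MeasurableSet {ω | M < Y ω} := measurableSet_lt measurable_const hY
  calc ∫⁻ ω, min (Y ω) c ∂μ
      ≤ ∫⁻ ω, (M + ({ω | M < Y ω}).indicator (fun _ => c) ω) ∂μ := by
        refine lintegral_mono fun ω => ?_
        by_cases h : M < Y ω
        · rw [Set.indicator_of_mem (s := {ω | M < Y ω}) (a := ω) h]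
          exact le_add_left (min_le_right _ _)
        · rw [Set.indicator_of_notMem (s := {ω | M < Y ω}) (a := ω) h]
          rw [add_zero]
          exact le_trans (min_le_left _ _) (not_lt.1 h)
    _ = M + c * μ {ω | M < Y ω} := by
        rw [lintegral_add_left measurable_const, lintegral_indicator hset, lintegral_const,
          lintegral_const, measure_univ, mul_one, Measure.restrict_apply_univ]

lemma tail_tendsto_zero (μ : Measure Ω) [IsProbabilityMeasure μ]
    {Y : Ω → ℝ≥0∞} (hY : Measurable Y) (hfin : ∀ ω, Y ω ≠ ∞) :
    Tendsto (fun n : ℕ => μ {ω | (n : ℝ≥0∞) < Y ω}) atTop (𝓝 0) := by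
  have hanti : Antitone fun n : ℕ => {ω | (n : ℝ≥0∞) < Y ω} := by
    intro m n hmn ω hω
    exact lt_of_le_of_lt (Nat.mono_cast (α := ℝ≥0∞) hmn) hω
  have hempty : ⋂ n : ℕ, {ω | (n : ℝ≥0∞) < Y ω} = ∅ := by
    ext ω
    simp only [Set.mem_iInter, Set.mem_setOf_eq, Set.mem_empty_iff_false, iff_false, not_forall]
    obtain ⟨n, hn⟩ := ENNReal.exists_nat_gt (hfin ω)
    exact ⟨n, not_lt.2 hn.le⟩
  have := tendsto_measure_iInter_atTop (ι := ℕ) (μ := μ) (s := fun n : ℕ => {ω | (n : ℝ≥0∞) < Y ω})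
    (fun n : ℕ => ((measurableSet_lt measurable_const hY)).nullMeasurableSet) hanti
    ⟨0, measure_ne_top μ _⟩
  rw [hempty] at this
  simpa [Function.comp_def] using this

lemma lintegral_eq_iSup_min (μ : Measure Ω) {Y : Ω → ℝ≥0∞} (hY : Measurable Y)
    (c : ℕ → ℝ≥0∞) (hmono : Monotone c) (hsup : (⨆ n, c n) = ∞) :
    ∫⁻ ω, Y ω ∂μ = ⨆ n, ∫⁻ ω, min (Y ω) (c n) ∂μ := by
  rw [← lintegral_iSup (fun n => hY.min measurable_const)
    (fun m n hmn ω => min_le_min le_rfl (hmono hmn))]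
  congr 1
  ext ω
  rw [show (fun n => min (Y ω) (c n)) = fun n => Y ω ⊓ c n from rfl]
  rw [← inf_iSup_eq, hsup, inf_top_eq]
/-- Bridge: from an `ℝ≥0∞`-valued recursion to a uniform bound. -/
lemma bridge (G : ℝ≥0∞ → ℝ≥0∞) (ρ' K' : ℝ≥0∞) (hρ0 : 0 < ρ') (hρ1 : ρ' < 1) (hK : K' ≠ ∞)
    (hbdd : ∀ s : ℝ, 0 < s → G (ENNReal.ofReal s) ≤ ENNReal.ofReal s)
    (hstep : ∀ s : ℝ, 0 < s → G (ENNReal.ofReal s) ≤ ρ' * G (ENNReal.ofReal s / ρ') + K')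
    (hsmall : ∀ ε : ℝ≥0∞, 0 < ε → ∃ M : ℝ≥0∞, M ≠ ∞ ∧
      ∀ s : ℝ, 0 < s → G (ENNReal.ofReal s) ≤ M + ENNReal.ofReal s * ε) :
    ∃ C : ℝ≥0∞, C ≠ ∞ ∧ ∀ s : ℝ, 0 < s → G (ENNReal.ofReal s) ≤ C := by
  have hρt : ρ' ≠ ∞ := (hρ1.trans ENNReal.one_lt_top).ne
  set ρ := ρ'.toReal with hρ
  have hρpos : 0 < ρ := ENNReal.toReal_pos hρ0.ne' hρt
  have hρlt1 : ρ < 1 := by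
    rw [hρ, ← ENNReal.toReal_one]
    exact ENNReal.toReal_strict_mono ENNReal.one_ne_top hρ1
  set F : ℝ → ℝ := fun s => (G (ENNReal.ofReal s)).toReal with hF
  have hGfin : ∀ s : ℝ, 0 < s → G (ENNReal.ofReal s) ≠ ∞ :=
    fun s hs => ((hbdd s hs).trans_lt ENNReal.ofReal_lt_top).ne
  have hmain : ∀ s, 0 < s → F s ≤ K'.toReal / (1 - ρ) := by
    refine key_recursion F (fun s => ENNReal.toReal_nonneg) ρ K'.toReal hρpos hρlt1
      ENNReal.toReal_nonneg ?_ ?_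
    · intro s hs
      have hdiv : ENNReal.ofReal s / ρ' = ENNReal.ofReal (s / ρ) := by
        rw [ENNReal.ofReal_div_of_pos hρpos, hρ, ENNReal.ofReal_toReal hρt]
      have h1 := hstep s hs
      rw [hdiv] at h1
      have hsρ : 0 < s / ρ := div_pos hs hρpos
      have hfin2 : ρ' * G (ENNReal.ofReal (s / ρ)) + K' ≠ ∞ :=
        ENNReal.add_ne_top.2 ⟨ENNReal.mul_ne_top hρt (hGfin _ hsρ), hK⟩
      have := ENNReal.toReal_mono hfin2 h1
      rw [ENNReal.toReal_add (ENNReal.mul_ne_top hρt (hGfin _ hsρ)) hK,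
        ENNReal.toReal_mul] at this
      exact this
    · intro ε hε
      obtain ⟨M, hMfin, hM⟩ := hsmall (ENNReal.ofReal (ε / 2)) (ENNReal.ofReal_pos.2 (by linarith))
      refine ⟨2 * M.toReal / ε + 1, fun s hs1 => ?_⟩
      have hspos : 0 < s := lt_of_lt_of_le (by positivity) hs1
      have h1 := hM s hspos
      have h2 : (M + ENNReal.ofReal s * ENNReal.ofReal (ε / 2)) ≠ ∞ :=
        ENNReal.add_ne_top.2 ⟨hMfin, ENNReal.mul_ne_top ENNReal.ofReal_ne_top
          ENNReal.ofReal_ne_top⟩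
      have h3 := ENNReal.toReal_mono h2 h1
      rw [ENNReal.toReal_add hMfin (ENNReal.mul_ne_top ENNReal.ofReal_ne_top
          ENNReal.ofReal_ne_top), ENNReal.toReal_mul, ENNReal.toReal_ofReal hspos.le,
        ENNReal.toReal_ofReal (by linarith : (0:ℝ) ≤ ε / 2)] at h3
      have h4 : M.toReal ≤ ε / 2 * s := by
        have : 2 * M.toReal / ε ≤ s - 1 := by linarith
        have h5 : 2 * M.toReal / ε ≤ s := by linarith
        calc M.toReal = ε / 2 * (2 * M.toReal / ε) := by field_simp
          _ ≤ ε / 2 * s := by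
              exact mul_le_mul_of_nonneg_left h5 (by linarith)
      calc F s ≤ M.toReal + s * (ε / 2) := h3
        _ ≤ ε / 2 * s + s * (ε / 2) := by linarith
        _ = ε * s := by ring
  refine ⟨ENNReal.ofReal (K'.toReal / (1 - ρ)), ENNReal.ofReal_ne_top, fun s hs => ?_⟩
  have := hmain s hs
  calc G (ENNReal.ofReal s) = ENNReal.ofReal (F s) := by
        rw [hF, ENNReal.ofReal_toReal (hGfin s hs)]
    _ ≤ ENNReal.ofReal (K'.toReal / (1 - ρ)) := ENNReal.ofReal_le_ofReal this
lemma onedim (μ : Measure Ω) [IsProbabilityMeasure μ] {a : ℝ} (ha : 0 < a)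
    {X Aii R : Ω → ℝ≥0∞}
    (hX : Measurable X) (hA : Measurable Aii) (hR : Measurable R)
    (hXfin : ∀ ω, X ω ≠ ∞)
    (hindep : IndepFun Aii X μ)
    (hr0 : 0 < ∫⁻ ω, Aii ω ^ a ∂μ)
    (hr1 : ∫⁻ ω, Aii ω ^ a ∂μ < 1)
    (hK : ∫⁻ ω, R ω ^ a ∂μ ≠ ∞)
    (hstep : ∀ c : ℝ≥0∞, ∫⁻ ω, min (X ω ^ a) c ∂μ
      ≤ ∫⁻ ω, min ((Aii ω * X ω + R ω) ^ a) c ∂μ) :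
    ∫⁻ ω, X ω ^ a ∂μ < ∞ := by
  set r := ∫⁻ ω, Aii ω ^ a ∂μ with hrdef
  set Kv := ∫⁻ ω, R ω ^ a ∂μ with hKdef
  have hrt : r ≠ ∞ := (hr1.trans ENNReal.one_lt_top).ne
  have mrpow : Measurable fun x : ℝ≥0∞ => x ^ a := (ENNReal.continuous_rpow_const).measurable
  have mXa : Measurable fun ω => X ω ^ a := mrpow.comp hX
  have mAa : Measurable fun ω => Aii ω ^ a := mrpow.comp hA
  have mAX : Measurable fun ω => Aii ω * X ω := hA.mul hX
  have hXafin : ∀ ω, X ω ^ a ≠ ∞ := fun ω => ENNReal.rpow_ne_top_of_nonneg ha.le (hXfin ω)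
  have hindepa : IndepFun (fun ω => Aii ω ^ a) (fun ω => X ω ^ a) μ :=
    hindep.comp mrpow mrpow
  -- the independence bound
  have hG : ∀ c : ℝ≥0∞, ∫⁻ ω, min ((Aii ω * X ω) ^ a) c ∂μ
      ≤ r * ∫⁻ ω, min (X ω ^ a) (c / r) ∂μ := by
    intro c
    calc ∫⁻ ω, min ((Aii ω * X ω) ^ a) c ∂μ
        = ∫⁻ ω, min (Aii ω ^ a * X ω ^ a) c ∂μ := by
          simp_rw [ENNReal.mul_rpow_of_nonneg _ _ ha.le]
      _ ≤ ∫⁻ ω, min (r * X ω ^ a) c ∂μ := indep_min_bound μ mAa mXa hindepa c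
      _ = ∫⁻ ω, r * min (X ω ^ a) (c / r) ∂μ := by
          simp_rw [mul_min' r _ c hr0.ne' hrt]
      _ = r * ∫⁻ ω, min (X ω ^ a) (c / r) ∂μ := lintegral_const_mul r (mXa.min measurable_const)
  -- the tail bound
  have htail : ∀ (ε : ℝ≥0∞), 0 < ε → ∃ M : ℝ≥0∞, M ≠ ∞ ∧
      ∀ c : ℝ≥0∞, ∫⁻ ω, min (X ω ^ a) c ∂μ ≤ M + c * ε := by
    intro ε hε
    have := (tail_tendsto_zero μ mXa hXafin).eventually_lt_const hε
    obtain ⟨n₀, hn₀⟩ := this.exists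
    refine ⟨(n₀ : ℝ≥0∞), ENNReal.natCast_ne_top n₀, fun c => ?_⟩
    calc ∫⁻ ω, min (X ω ^ a) c ∂μ ≤ (n₀ : ℝ≥0∞) + c * μ {ω | (n₀ : ℝ≥0∞) < X ω ^ a} :=
          lintegral_min_le_tail μ mXa c _
      _ ≤ (n₀ : ℝ≥0∞) + c * ε := add_le_add le_rfl (mul_le_mul_right hn₀.le c)
  -- the sup decomposition
  have hsupdec : ∀ c : ℕ → ℝ≥0∞, Monotone c → (⨆ n, c n) = ∞ →
      ∫⁻ ω, X ω ^ a ∂μ = ⨆ n, ∫⁻ ω, min (X ω ^ a) (c n) ∂μ :=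
    fun c hc hsup => lintegral_eq_iSup_min μ mXa c hc hsup
  have hmono1 : Monotone fun n : ℕ => ENNReal.ofReal ((n : ℝ) + 1) := by
    intro m n hmn
    apply ENNReal.ofReal_le_ofReal
    have := (Nat.cast_le (α := ℝ)).2 hmn
    linarith
  have hsup1 : (⨆ n : ℕ, ENNReal.ofReal ((n : ℝ) + 1)) = ⊤ := by
    rw [iSup_eq_top]
    intro b hb
    obtain ⟨n, hn⟩ := ENNReal.exists_nat_gt hb.ne
    refine ⟨n, lt_of_lt_of_le hn ?_⟩
    rw [← ENNReal.ofReal_natCast n]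
    exact ENNReal.ofReal_le_ofReal (by linarith)
  rcases le_or_gt a 1 with ha1 | ha1
  · -- case a ≤ 1 : subadditivity
    set G : ℝ≥0∞ → ℝ≥0∞ := fun c => ∫⁻ ω, min (X ω ^ a) c ∂μ with hGdef
    have hbdd : ∀ s : ℝ, 0 < s → G (ENNReal.ofReal s) ≤ ENNReal.ofReal s := by
      intro s _
      calc G (ENNReal.ofReal s) ≤ ∫⁻ _, ENNReal.ofReal s ∂μ :=
            lintegral_mono fun ω => min_le_right _ _
        _ = ENNReal.ofReal s := by simp
    have hstep' : ∀ s : ℝ, 0 < s → G (ENNReal.ofReal s)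
        ≤ r * G (ENNReal.ofReal s / r) + Kv := by
      intro s _
      set c := ENNReal.ofReal s
      calc G c ≤ ∫⁻ ω, min ((Aii ω * X ω + R ω) ^ a) c ∂μ := hstep c
        _ ≤ ∫⁻ ω, (min ((Aii ω * X ω) ^ a) c + R ω ^ a) ∂μ := by
            refine lintegral_mono fun ω => ?_
            calc min ((Aii ω * X ω + R ω) ^ a) c
                ≤ min ((Aii ω * X ω) ^ a + R ω ^ a) c :=
                  min_le_min (ENNReal.rpow_add_le_add_rpow _ _ ha.le ha1) le_rfl
              _ ≤ min ((Aii ω * X ω) ^ a) c + R ω ^ a := min_add_le _ _ _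
        _ = ∫⁻ ω, min ((Aii ω * X ω) ^ a) c ∂μ + Kv := by
            have hmm : Measurable fun ω => min ((Aii ω * X ω) ^ a) c :=
              (mrpow.comp mAX).min measurable_const
            rw [lintegral_add_left hmm]
        _ ≤ r * G (c / r) + Kv := by
            gcongr
            exact hG c
    have hsmall : ∀ ε : ℝ≥0∞, 0 < ε → ∃ M : ℝ≥0∞, M ≠ ∞ ∧
        ∀ s : ℝ, 0 < s → G (ENNReal.ofReal s) ≤ M + ENNReal.ofReal s * ε := by
      intro ε hε
      obtain ⟨M, hMfin, hM⟩ := htail ε hε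
      exact ⟨M, hMfin, fun s _ => hM _⟩
    obtain ⟨C, hCfin, hC⟩ := bridge G r Kv hr0 hr1 hK hbdd hstep' hsmall
    rw [hsupdec (fun n => ENNReal.ofReal ((n : ℝ) + 1)) hmono1 hsup1]
    refine lt_of_le_of_lt (iSup_le fun n => ?_) hCfin.lt_top
    exact hC ((n : ℝ) + 1) (by positivity)
  · -- case a > 1 : Minkowski
    set E : ℝ≥0∞ → ℝ≥0∞ := fun σ => (∫⁻ ω, min (X ω ^ a) (σ ^ a) ∂μ) ^ (1 / a) with hEdef
    have hmono_rpow : Monotone fun x : ℝ≥0∞ => x ^ a := fun x y h => ENNReal.rpow_le_rpow h ha.le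
    have hmin_pow : ∀ (u σ : ℝ≥0∞), min u σ ^ a = min (u ^ a) (σ ^ a) :=
      fun u σ => hmono_rpow.map_min
    have hcollapse : ∀ x : ℝ≥0∞, (x ^ a) ^ (1 / a) = x := by
      intro x
      rw [← ENNReal.rpow_mul, mul_one_div, div_self ha.ne', ENNReal.rpow_one]
    have hcollapse' : ∀ x : ℝ≥0∞, (x ^ (1 / a)) ^ a = x := by
      intro x
      rw [← ENNReal.rpow_mul, one_div, inv_mul_cancel₀ ha.ne', ENNReal.rpow_one]
    set ρ' := r ^ (1 / a) with hρ'def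
    have hρ'0 : 0 < ρ' := ENNReal.rpow_pos hr0 hrt
    have hρ'1 : ρ' < 1 := ENNReal.rpow_lt_one hr1 (by positivity)
    have hρ't : ρ' ≠ ∞ := (hρ'1.trans ENNReal.one_lt_top).ne
    set K' := Kv ^ (1 / a) with hK'def
    have hK't : K' ≠ ∞ := ENNReal.rpow_ne_top_of_nonneg (by positivity) hK
    have hEstep : ∀ σ : ℝ≥0∞, E σ ≤ ρ' * E (σ / ρ') + K' := by
      intro σ
      have h1 : ∫⁻ ω, min (X ω ^ a) (σ ^ a) ∂μ
          ≤ ∫⁻ ω, (min (Aii ω * X ω) σ + R ω) ^ a ∂μ := by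
        calc ∫⁻ ω, min (X ω ^ a) (σ ^ a) ∂μ
            ≤ ∫⁻ ω, min ((Aii ω * X ω + R ω) ^ a) (σ ^ a) ∂μ := hstep (σ ^ a)
          _ ≤ ∫⁻ ω, (min (Aii ω * X ω) σ + R ω) ^ a ∂μ := by
              refine lintegral_mono fun ω => ?_
              rw [← hmin_pow]
              exact hmono_rpow (min_add_le _ _ _)
      have h2 : E σ ≤ (∫⁻ ω, (min (Aii ω * X ω) σ + R ω) ^ a ∂μ) ^ (1 / a) := by
        rw [hEdef]
        exact ENNReal.rpow_le_rpow h1 (by positivity)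
      have h3 : (∫⁻ ω, (min (Aii ω * X ω) σ + R ω) ^ a ∂μ) ^ (1 / a)
          ≤ (∫⁻ ω, min (Aii ω * X ω) σ ^ a ∂μ) ^ (1 / a) + K' :=
        ENNReal.lintegral_Lp_add_le (mAX.min measurable_const).aemeasurable
          hR.aemeasurable ha1.le
      have h4 : (∫⁻ ω, min (Aii ω * X ω) σ ^ a ∂μ) ^ (1 / a) ≤ ρ' * E (σ / ρ') := by
        have hdiv : σ ^ a / r = (σ / ρ') ^ a := by
          rw [ENNReal.div_rpow_of_nonneg _ _ ha.le, hρ'def, hcollapse']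
        have h5 : ∫⁻ ω, min (Aii ω * X ω) σ ^ a ∂μ
            ≤ r * ∫⁻ ω, min (X ω ^ a) ((σ / ρ') ^ a) ∂μ := by
          simp_rw [hmin_pow]
          rw [← hdiv]
          exact hG (σ ^ a)
        calc (∫⁻ ω, min (Aii ω * X ω) σ ^ a ∂μ) ^ (1 / a)
            ≤ (r * ∫⁻ ω, min (X ω ^ a) ((σ / ρ') ^ a) ∂μ) ^ (1 / a) :=
              ENNReal.rpow_le_rpow h5 (by positivity)
          _ = ρ' * E (σ / ρ') := by
              rw [ENNReal.mul_rpow_of_nonneg _ _ (by positivity : (0:ℝ) ≤ 1 / a), hρ'def, hEdef]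
      calc E σ ≤ (∫⁻ ω, (min (Aii ω * X ω) σ + R ω) ^ a ∂μ) ^ (1 / a) := h2
        _ ≤ (∫⁻ ω, min (Aii ω * X ω) σ ^ a ∂μ) ^ (1 / a) + K' := h3
        _ ≤ ρ' * E (σ / ρ') + K' := by gcongr
    have hbdd : ∀ s : ℝ, 0 < s → E (ENNReal.ofReal s) ≤ ENNReal.ofReal s := by
      intro s _
      rw [hEdef]
      calc (∫⁻ ω, min (X ω ^ a) (ENNReal.ofReal s ^ a) ∂μ) ^ (1 / a)
          ≤ (∫⁻ _, ENNReal.ofReal s ^ a ∂μ) ^ (1 / a) :=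
            ENNReal.rpow_le_rpow (lintegral_mono fun ω => min_le_right _ _) (by positivity)
        _ = ENNReal.ofReal s := by
            rw [lintegral_const, measure_univ, mul_one, hcollapse]
    have hsmall : ∀ ε : ℝ≥0∞, 0 < ε → ∃ M : ℝ≥0∞, M ≠ ∞ ∧
        ∀ s : ℝ, 0 < s → E (ENNReal.ofReal s) ≤ M + ENNReal.ofReal s * ε := by
      intro ε hε
      set ε' := min ε 1 with hε'def
      have hε'ne_top : ε' ≠ ∞ := ((min_le_right ε 1).trans_lt ENNReal.one_lt_top).ne
      have hε'0 : 0 < ε' ^ a := ENNReal.rpow_pos (lt_min hε zero_lt_one) hε'ne_top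
      obtain ⟨M, hMfin, hM⟩ := htail (ε' ^ a) hε'0
      refine ⟨M ^ (1 / a), ENNReal.rpow_ne_top_of_nonneg (by positivity) hMfin,
        fun s hs => ?_⟩
      have h1 : E (ENNReal.ofReal s) ≤ (M + ENNReal.ofReal s ^ a * ε' ^ a) ^ (1 / a) := by
        rw [hEdef]
        exact ENNReal.rpow_le_rpow (hM _) (by positivity)
      calc E (ENNReal.ofReal s) ≤ (M + ENNReal.ofReal s ^ a * ε' ^ a) ^ (1 / a) := h1
        _ ≤ M ^ (1 / a) + (ENNReal.ofReal s ^ a * ε' ^ a) ^ (1 / a) :=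
            ENNReal.rpow_add_le_add_rpow _ _ (by positivity) (by
              rw [div_le_one ha]; exact ha1.le)
        _ = M ^ (1 / a) + ENNReal.ofReal s * ε' := by
            rw [ENNReal.mul_rpow_of_nonneg _ _ (by positivity : (0:ℝ) ≤ 1 / a),
              hcollapse, hcollapse]
        _ ≤ M ^ (1 / a) + ENNReal.ofReal s * ε := by
            gcongr
            exact min_le_left _ _
    obtain ⟨C, hCfin, hC⟩ := bridge E ρ' K' hρ'0 hρ'1 hK't hbdd (fun s _ => hEstep _) hsmall
    have hmono2 : Monotone fun n : ℕ => ENNReal.ofReal ((n : ℝ) + 1) ^ a :=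
      fun m n hmn => hmono_rpow (hmono1 hmn)
    have hsup2 : (⨆ n : ℕ, ENNReal.ofReal ((n : ℝ) + 1) ^ a) = ⊤ := by
      rw [iSup_eq_top]
      intro b hb
      obtain ⟨n, hn⟩ := ENNReal.exists_nat_gt hb.ne
      refine ⟨n, lt_of_lt_of_le hn ?_⟩
      calc (n : ℝ≥0∞) ≤ ENNReal.ofReal ((n : ℝ) + 1) := by
            rw [← ENNReal.ofReal_natCast n]
            exact ENNReal.ofReal_le_ofReal (by linarith)
        _ ≤ ENNReal.ofReal ((n : ℝ) + 1) ^ a := by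
            refine le_trans (le_of_eq (ENNReal.rpow_one _).symm) ?_
            refine ENNReal.rpow_le_rpow_of_exponent_le ?_ ha1.le
            rw [← ENNReal.ofReal_one]
            exact ENNReal.ofReal_le_ofReal (by linarith [Nat.cast_nonneg (α := ℝ) n])
    rw [hsupdec (fun n => ENNReal.ofReal ((n : ℝ) + 1) ^ a) hmono2 hsup2]
    refine lt_of_le_of_lt (iSup_le fun n => ?_)
      ((ENNReal.rpow_ne_top_of_nonneg ha.le hCfin).lt_top : C ^ a < ∞)
    have h7 := hC ((n : ℝ) + 1) (by positivity)
    have h8 : (E (ENNReal.ofReal (n+1))) ^ a ≤ C ^ a := ENNReal.rpow_le_rpow h7 ha.le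
    rw [hEdef] at h8
    rwa [hcollapse'] at h8
lemma rpow_le_one_add_rpow (t : ℝ≥0∞) {a b : ℝ} (ha : 0 ≤ a) (hab : a ≤ b) :
    t ^ a ≤ 1 + t ^ b := by
  rcases le_total t 1 with h | h
  · exact le_trans (ENNReal.rpow_le_one h ha) le_self_add
  · exact le_trans (ENNReal.rpow_le_rpow_of_exponent_le h hab) le_add_self

/-- finiteness of `∫ (f+g)^a` from that of `∫ f^a` and `∫ g^a`, any `a > 0`. -/
lemma lintegral_rpow_add_lt_top (μ : Measure Ω) [IsProbabilityMeasure μ] {a : ℝ} (ha : 0 < a)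
    {f g : Ω → ℝ≥0∞} (hf : Measurable f) (hg : Measurable g)
    (hfin : ∫⁻ ω, f ω ^ a ∂μ < ∞) (hgfin : ∫⁻ ω, g ω ^ a ∂μ < ∞) :
    ∫⁻ ω, (f ω + g ω) ^ a ∂μ < ∞ := by
  rcases le_or_gt a 1 with ha1 | ha1
  · calc ∫⁻ ω, (f ω + g ω) ^ a ∂μ ≤ ∫⁻ ω, (f ω ^ a + g ω ^ a) ∂μ :=
        lintegral_mono fun ω => ENNReal.rpow_add_le_add_rpow _ _ ha.le ha1
      _ = ∫⁻ ω, f ω ^ a ∂μ + ∫⁻ ω, g ω ^ a ∂μ := lintegral_add_left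
          ((ENNReal.continuous_rpow_const.measurable).comp hf) _
      _ < ∞ := ENNReal.add_lt_top.2 ⟨hfin, hgfin⟩
  · have h1 : (∫⁻ ω, (f ω + g ω) ^ a ∂μ) ^ (1 / a)
        ≤ (∫⁻ ω, f ω ^ a ∂μ) ^ (1 / a) + (∫⁻ ω, g ω ^ a ∂μ) ^ (1 / a) :=
      ENNReal.lintegral_Lp_add_le hf.aemeasurable hg.aemeasurable ha1.le
    have h2 : (∫⁻ ω, (f ω + g ω) ^ a ∂μ) = ((∫⁻ ω, (f ω + g ω) ^ a ∂μ) ^ (1 / a)) ^ a := by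
      rw [← ENNReal.rpow_mul, one_div, inv_mul_cancel₀ ha.ne', ENNReal.rpow_one]
    rw [h2]
    have h3 : (∫⁻ ω, (f ω + g ω) ^ a ∂μ) ^ (1 / a) ≠ ∞ := by
      refine (h1.trans_lt (ENNReal.add_lt_top.2 ⟨?_, ?_⟩)).ne
      · exact (ENNReal.rpow_lt_top_of_nonneg (by positivity) hfin.ne)
      · exact (ENNReal.rpow_lt_top_of_nonneg (by positivity) hgfin.ne)
    exact ENNReal.rpow_lt_top_of_nonneg ha.le h3

end Aux

/-- Lemma 4.2 of the paper: under condition (T), every coordinate `W i` of the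
stationary solution has finite moments of every order `a` with `0 < a < α̃ i`. -/
theorem moments_below_tilde_index
    (μ : Measure Ω) [IsProbabilityMeasure μ]
    {d : ℕ} (hd : 1 ≤ d)
    (A : Ω → Matrix (Fin d) (Fin d) ℝ) (B : Ω → Fin d → ℝ) (α : Fin d → ℝ)
    (hT : CondT μ A B α)
    (W : Ω → Fin d → ℝ) (hWmeas : ∀ i, Measurable fun ω => W ω i)
    (hWindep : IndepFun W (fun ω => (Matrix.of.symm (A ω), B ω)) μ)
    (hWfix : μ.map W = μ.map (fun ω => A ω *ᵥ W ω + B ω)) :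
    ∀ i : Fin d, ∀ a : ℝ, 0 < a → a < tildeAlpha μ A α i →
      ∫⁻ ω, ENNReal.ofReal (W ω i ^ a) ∂μ < ⊤ := by

  classical
  have hWm : Measurable W := measurable_pi_lambda _ hWmeas
  have mrpow : ∀ b : ℝ, Measurable fun x : ℝ≥0∞ => x ^ b :=
    fun b => (ENNReal.continuous_rpow_const).measurable
  have mX : ∀ j, Measurable fun ω => ENNReal.ofReal |W ω j| :=
    fun j => ENNReal.measurable_ofReal.comp (hWmeas j).abs
  have mAe : ∀ i j, Measurable fun ω => ENNReal.ofReal (A ω i j) :=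
    fun i j => ENNReal.measurable_ofReal.comp (hT.measA i j)
  have mBe : ∀ i, Measurable fun ω => ENNReal.ofReal (B ω i) :=
    fun i => ENNReal.measurable_ofReal.comp (hT.measB i)
  -- tildeAlpha facts
  have hSfin : ∀ i, ({x | ∃ j, Dep μ A i j ∧ x = α j}).Finite := fun i =>
    Set.Finite.subset (Set.finite_range α) (fun x hx => by
      obtain ⟨j, _, hj⟩ := hx; exact ⟨j, hj.symm⟩)
  have htA_le : ∀ i, tildeAlpha μ A α i ≤ α i := fun i =>
    csInf_le (hSfin i).bddBelow ⟨i, Relation.ReflTransGen.refl, rfl⟩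
  have htA_mono : ∀ i j, Dep μ A i j → tildeAlpha μ A α i ≤ tildeAlpha μ A α j := by
    intro i j hdep
    refine csInf_le_csInf (hSfin i).bddBelow ⟨α j, j, Relation.ReflTransGen.refl, rfl⟩ ?_
    rintro x ⟨k, hk, hx⟩
    exact ⟨k, hdep.trans hk, hx⟩
  -- generic moment bound for `ofReal`-entries
  have hofReal_mom : ∀ (i : Fin d) (a : ℝ), 0 < a → a ≤ α i → ∀ (h : Ω → ℝ),
      Measurable h → (∀ᵐ ω ∂μ, 0 ≤ h ω) → Integrable (fun ω => h ω ^ (α i)) μ →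
      ∫⁻ ω, (ENNReal.ofReal (h ω)) ^ a ∂μ < ∞ := by
    intro i a ha haα h hm hnn hint
    have h1 : ∫⁻ ω, (ENNReal.ofReal (h ω)) ^ (α i) ∂μ
        = ENNReal.ofReal (∫ ω, h ω ^ (α i) ∂μ) := by
      have heq : ∀ᵐ ω ∂μ, (ENNReal.ofReal (h ω)) ^ (α i) = ENNReal.ofReal (h ω ^ (α i)) := by
        filter_upwards [hnn] with ω h0
        exact ENNReal.ofReal_rpow_of_nonneg h0 (ha.trans_le haα).le
      rw [lintegral_congr_ae heq,
        ← ofReal_integral_eq_lintegral_ofReal hint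
          (by filter_upwards [hnn] with ω h0 using Real.rpow_nonneg h0 _)]
    calc ∫⁻ ω, (ENNReal.ofReal (h ω)) ^ a ∂μ
        ≤ ∫⁻ ω, (1 + (ENNReal.ofReal (h ω)) ^ (α i)) ∂μ :=
          lintegral_mono fun ω => rpow_le_one_add_rpow _ ha.le haα
      _ = 1 + ∫⁻ ω, (ENNReal.ofReal (h ω)) ^ (α i) ∂μ := by
          rw [lintegral_add_left measurable_const, lintegral_const, measure_univ, mul_one]
      _ < ∞ := by
          rw [h1]
          exact ENNReal.add_lt_top.2 ⟨ENNReal.one_lt_top, ENNReal.ofReal_lt_top⟩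
  -- measurability of the pair and of `A *ᵥ W + B`
  have hpairm : Measurable (fun ω => (Matrix.of.symm (A ω), B ω)) := by
    refine Measurable.prodMk ?_ (measurable_pi_lambda _ hT.measB)
    exact measurable_pi_lambda _ fun i => measurable_pi_lambda _ fun j => hT.measA i j
  have hYm : Measurable (fun ω => A ω *ᵥ W ω + B ω) := by
    refine measurable_pi_lambda _ fun i => ?_
    have : (fun ω => (A ω *ᵥ W ω + B ω) i)
        = fun ω => (∑ j, A ω i j * W ω j) + B ω i := by
      ext ω
      simp [Matrix.mulVec, dotProduct]
    rw [this]
    exact (Finset.measurable_sum _ fun j _ => (hT.measA i j).mul (hWmeas j)).add (hT.measB i)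
  -- main downward induction
  have main : ∀ n : ℕ, ∀ i : Fin d, d ≤ i.val + n → ∀ a : ℝ, 0 < a →
      a < tildeAlpha μ A α i → ∫⁻ ω, (ENNReal.ofReal |W ω i|) ^ a ∂μ < ∞ := by
    intro n
    induction n with
    | zero =>
      intro i hle
      exfalso
      have := i.isLt
      omega
    | succ n ih =>
      intro i hle a ha haa
      have haα : a < α i := lt_of_lt_of_le haa (htA_le i)
      -- the nonarithmetic set
      have hTset : {ω | 0 < A ω i i ∧ ∀ k : ℤ, Real.log (A ω i i) ≠ 0 * k}
          ⊆ {ω | A ω i i ≠ 1} := by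
        intro ω hω
        obtain ⟨hpos, hlog⟩ := hω
        intro he
        exact hlog 0 (by rw [he, Real.log_one]; simp)
      have hne1 : μ {ω | A ω i i ≠ 1} ≠ 0 := by
        intro h0
        exact hT.nonarithmetic i 0 (measure_mono_null hTset h0)
      have hpos_meas : μ {ω | 0 < A ω i i} ≠ 0 := by
        intro h0
        refine hT.nonarithmetic i 0 (measure_mono_null ?_ h0)
        intro ω hω
        exact hω.1
      obtain ⟨hint_a, hlt1⟩ := contraction μ (hT.measA i i) (hT.nonnegA i i) ha haα
        (hT.A_moment i i) (hT.diag_moment_one i) hne1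
      -- the contraction in `ℝ≥0∞`
      have lr_eq : ∫⁻ ω, (ENNReal.ofReal (A ω i i)) ^ a ∂μ
          = ENNReal.ofReal (∫ ω, A ω i i ^ a ∂μ) := by
        have heq : ∀ᵐ ω ∂μ, (ENNReal.ofReal (A ω i i)) ^ a = ENNReal.ofReal (A ω i i ^ a) := by
          filter_upwards [hT.nonnegA i i] with ω h0
          exact ENNReal.ofReal_rpow_of_nonneg h0 ha.le
        rw [lintegral_congr_ae heq, ← ofReal_integral_eq_lintegral_ofReal hint_a
          (by filter_upwards [hT.nonnegA i i] with ω h0 using Real.rpow_nonneg h0 _)]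
      have lr1 : ∫⁻ ω, (ENNReal.ofReal (A ω i i)) ^ a ∂μ < 1 := by
        rw [lr_eq]
        exact ENNReal.ofReal_lt_one.2 hlt1
      have lr0 : 0 < ∫⁻ ω, (ENNReal.ofReal (A ω i i)) ^ a ∂μ := by
        rcases eq_or_ne (∫⁻ ω, (ENNReal.ofReal (A ω i i)) ^ a ∂μ) 0 with h0 | h0
        · exfalso
          have hae := (lintegral_eq_zero_iff ((mrpow a).comp (mAe i i))).1 h0
          apply hpos_meas
          have h7 := ae_iff.1 hae
          refine measure_mono_null ?_ h7
          intro ω hω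
          simp only [Set.mem_setOf_eq, Function.comp, Pi.zero_apply]
          intro hzero
          rw [ENNReal.rpow_eq_zero_iff] at hzero
          rcases hzero with ⟨h8, _⟩ | ⟨h8, _⟩
          · rw [ENNReal.ofReal_eq_zero] at h8
            exact absurd h8 (not_le.2 hω)
          · exact ENNReal.ofReal_ne_top h8
        · exact pos_iff_ne_zero.2 h0
      -- moments of off-diagonal entries
      have hAmom : ∀ j, ∫⁻ ω, (ENNReal.ofReal (A ω i j)) ^ a ∂μ < ∞ := fun j =>
        hofReal_mom i a ha haα.le _ (hT.measA i j) (hT.nonnegA i j) (hT.A_moment i j)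
      have hBmom : ∫⁻ ω, (ENNReal.ofReal (B ω i)) ^ a ∂μ < ∞ :=
        hofReal_mom i a ha haα.le _ (hT.measB i) (hT.nonnegB i) (hT.B_moment i)
      -- independence
      have hindepXA : ∀ (j k l : Fin d) (b c : ℝ), IndepFun
          (fun ω => (ENNReal.ofReal (A ω k l)) ^ b) (fun ω => (ENNReal.ofReal |W ω j|) ^ c) μ := by
        intro j k l b c
        have hφ : Measurable (fun p : (Fin d → Fin d → ℝ) × (Fin d → ℝ) =>
            (ENNReal.ofReal (p.1 k l)) ^ b) :=
          (mrpow b).comp (ENNReal.measurable_ofReal.comp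
            ((measurable_pi_apply l).comp ((measurable_pi_apply k).comp measurable_fst)))
        have hψ : Measurable (fun v : Fin d → ℝ => (ENNReal.ofReal |v j|) ^ c) :=
          (mrpow c).comp (ENNReal.measurable_ofReal.comp (measurable_pi_apply j).abs)
        exact (hWindep.comp hψ hφ).symm
      -- remainder
      set R : Ω → ℝ≥0∞ := fun ω =>
        (∑ j ∈ Finset.univ.erase i, ENNReal.ofReal (A ω i j) * ENNReal.ofReal |W ω j|)
          + ENNReal.ofReal (B ω i) with hRdef
      have mR : Measurable R :=
        (Finset.measurable_sum _ fun j _ => (mAe i j).mul (mX j)).add (mBe i)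
      -- moment of each remainder term
      have hterm : ∀ j, j ≠ i →
          ∫⁻ ω, (ENNReal.ofReal (A ω i j) * ENNReal.ofReal |W ω j|) ^ a ∂μ < ∞ := by
        intro j hj
        by_cases hdd : μ {ω | 0 < A ω i j} = 0
        · have hzero : ∀ᵐ ω ∂μ, (ENNReal.ofReal (A ω i j) * ENNReal.ofReal |W ω j|) ^ a = 0 := by
            have h1 : ∀ᵐ ω ∂μ, ω ∉ {ω | 0 < A ω i j} := (measure_eq_zero_iff_ae_notMem).1 hdd
            filter_upwards [h1, hT.nonnegA i j] with ω h2 h3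
            have h4 : A ω i j = 0 := le_antisymm (not_lt.1 h2) h3
            rw [h4]
            simp [ENNReal.zero_rpow_of_pos ha]
          rw [lintegral_congr_ae hzero]
          simp
        · have hdep : DirectDep μ A i j := pos_iff_ne_zero.2 hdd
          have hij : i < j := by
            rcases lt_trichotomy i j with h | h | h
            · exact h
            · exact absurd h.symm hj
            · exfalso
              apply hdd
              have h5 : ∀ᵐ ω ∂μ, A ω i j = 0 := hT.upperTriangular i j h
              refine measure_mono_null ?_ (ae_iff.1 h5)
              intro ω hω
              simp only [Set.mem_setOf_eq]
              exact ne_of_gt hω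
          have htAj : a < tildeAlpha μ A α j :=
            lt_of_lt_of_le haa (htA_mono i j (Relation.ReflTransGen.single hdep))
          have hXj : ∫⁻ ω, (ENNReal.ofReal |W ω j|) ^ a ∂μ < ∞ := by
            refine ih j ?_ a ha htAj
            have : i.val < j.val := hij
            omega
          have hsplit : ∫⁻ ω, (ENNReal.ofReal (A ω i j) * ENNReal.ofReal |W ω j|) ^ a ∂μ
              = (∫⁻ ω, (ENNReal.ofReal (A ω i j)) ^ a ∂μ)
                * ∫⁻ ω, (ENNReal.ofReal |W ω j|) ^ a ∂μ := by
            have h6 : ∀ ω, (ENNReal.ofReal (A ω i j) * ENNReal.ofReal |W ω j|) ^ a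
                = (ENNReal.ofReal (A ω i j)) ^ a * (ENNReal.ofReal |W ω j|) ^ a :=
              fun ω => ENNReal.mul_rpow_of_nonneg _ _ ha.le
            simp_rw [h6]
            exact lintegral_mul_eq_lintegral_mul_lintegral_of_indepFun
              ((mrpow a).comp (mAe i j)) ((mrpow a).comp (mX j)) (hindepXA j i j a a)
          rw [hsplit]
          exact ENNReal.mul_lt_top (hAmom j) hXj
      -- moment of the remainder
      have hKfin : ∫⁻ ω, R ω ^ a ∂μ < ∞ := by
        rw [hRdef]
        refine lintegral_rpow_add_lt_top μ ha
          (Finset.measurable_sum _ fun j _ => (mAe i j).mul (mX j)) (mBe i) ?_ hBmom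
        have hgen : ∀ s : Finset (Fin d), s ⊆ Finset.univ.erase i →
            ∫⁻ ω, (∑ j ∈ s, ENNReal.ofReal (A ω i j) * ENNReal.ofReal |W ω j|) ^ a ∂μ < ∞ := by
          intro s
          induction s using Finset.induction_on with
          | empty =>
            intro _
            simp [ENNReal.zero_rpow_of_pos ha]
          | insert j s hnotmem hins =>
            intro hsub
            have hjne : j ≠ i := by
              have := hsub (Finset.mem_insert_self j s)
              exact Finset.ne_of_mem_erase this
            have hssub : s ⊆ Finset.univ.erase i :=
              fun x hx => hsub (Finset.mem_insert_of_mem hx)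
            have heq : ∀ ω, (∑ k ∈ insert j s, ENNReal.ofReal (A ω i k) * ENNReal.ofReal |W ω k|)
                = ENNReal.ofReal (A ω i j) * ENNReal.ofReal |W ω j|
                  + ∑ k ∈ s, ENNReal.ofReal (A ω i k) * ENNReal.ofReal |W ω k| :=
              fun ω => Finset.sum_insert hnotmem
            simp_rw [heq]
            exact lintegral_rpow_add_lt_top μ ha ((mAe i j).mul (mX j))
              (Finset.measurable_sum _ fun k _ => (mAe i k).mul (mX k))
              (hterm j hjne) (hins hssub)
        exact hgen _ (Finset.Subset.refl _)
      -- the distributional step inequality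
      have hstep : ∀ c : ℝ≥0∞, ∫⁻ ω, min ((ENNReal.ofReal |W ω i|) ^ a) c ∂μ
          ≤ ∫⁻ ω, min ((ENNReal.ofReal (A ω i i) * ENNReal.ofReal |W ω i| + R ω) ^ a) c ∂μ := by
        intro c
        have hφ : Measurable (fun v : Fin d → ℝ => min ((ENNReal.ofReal |v i|) ^ a) c) :=
          ((mrpow a).comp (ENNReal.measurable_ofReal.comp (measurable_pi_apply i).abs)).min
            measurable_const
        have hmapeq : ∫⁻ ω, min ((ENNReal.ofReal |W ω i|) ^ a) c ∂μ
            = ∫⁻ ω, min ((ENNReal.ofReal |(A ω *ᵥ W ω + B ω) i|) ^ a) c ∂μ := by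
          calc ∫⁻ ω, min ((ENNReal.ofReal |W ω i|) ^ a) c ∂μ
              = ∫⁻ v, min ((ENNReal.ofReal |v i|) ^ a) c ∂(μ.map W) :=
                (lintegral_map hφ hWm).symm
            _ = ∫⁻ v, min ((ENNReal.ofReal |v i|) ^ a) c ∂(μ.map (fun ω => A ω *ᵥ W ω + B ω)) :=
                by rw [hWfix]
            _ = _ := lintegral_map hφ hYm
        rw [hmapeq]
        refine lintegral_mono_ae ?_
        have haeA : ∀ᵐ ω ∂μ, ∀ j, 0 ≤ A ω i j := ae_all_iff.2 fun j => hT.nonnegA i j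
        filter_upwards [haeA, hT.nonnegB i] with ω hA0 hB0
        refine min_le_min (ENNReal.rpow_le_rpow ?_ ha.le) le_rfl
        have hcoord : (A ω *ᵥ W ω + B ω) i = (∑ j, A ω i j * W ω j) + B ω i := by
          simp [Matrix.mulVec, dotProduct]
        have habs : |(A ω *ᵥ W ω + B ω) i| ≤ (∑ j, A ω i j * |W ω j|) + B ω i := by
          rw [hcoord]
          refine le_trans (abs_add_le _ _) ?_
          gcongr
          · refine le_trans (Finset.abs_sum_le_sum_abs _ _) ?_
            refine Finset.sum_le_sum fun j _ => ?_
            rw [abs_mul, abs_of_nonneg (hA0 j)]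
          · exact le_of_eq (abs_of_nonneg hB0)
        calc ENNReal.ofReal |(A ω *ᵥ W ω + B ω) i|
            ≤ ENNReal.ofReal ((∑ j, A ω i j * |W ω j|) + B ω i) := ENNReal.ofReal_le_ofReal habs
          _ = (∑ j, ENNReal.ofReal (A ω i j * |W ω j|)) + ENNReal.ofReal (B ω i) := by
              rw [ENNReal.ofReal_add (Finset.sum_nonneg fun j _ =>
                mul_nonneg (hA0 j) (abs_nonneg _)) hB0,
                ENNReal.ofReal_sum_of_nonneg fun j _ => mul_nonneg (hA0 j) (abs_nonneg _)]
          _ = (∑ j, ENNReal.ofReal (A ω i j) * ENNReal.ofReal |W ω j|) + ENNReal.ofReal (B ω i)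
              := by
              congr 1
              refine Finset.sum_congr rfl fun j _ => ?_
              rw [ENNReal.ofReal_mul (hA0 j)]
          _ = ENNReal.ofReal (A ω i i) * ENNReal.ofReal |W ω i| + R ω := by
              rw [hRdef]
              rw [← Finset.add_sum_erase _ _ (Finset.mem_univ i), add_assoc]
      -- independence for onedim
      have hindep_ai : IndepFun (fun ω => ENNReal.ofReal (A ω i i))
          (fun ω => ENNReal.ofReal |W ω i|) μ := by
        have hφ : Measurable (fun p : (Fin d → Fin d → ℝ) × (Fin d → ℝ) =>
            ENNReal.ofReal (p.1 i i)) :=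
          ENNReal.measurable_ofReal.comp
            ((measurable_pi_apply i).comp ((measurable_pi_apply i).comp measurable_fst))
        have hψ : Measurable (fun v : Fin d → ℝ => ENNReal.ofReal |v i|) :=
          ENNReal.measurable_ofReal.comp (measurable_pi_apply i).abs
        exact (hWindep.comp hψ hφ).symm
      exact onedim μ ha (mX i) (mAe i i) mR (fun ω => ENNReal.ofReal_ne_top)
        hindep_ai lr0 lr1 hKfin.ne hstep
  intro i a ha haa
  have h := main d i (by omega) a ha haa
  refine lt_of_le_of_lt (lintegral_mono fun ω => ?_) h
  calc ENNReal.ofReal (W ω i ^ a) ≤ ENNReal.ofReal (|W ω i| ^ a) :=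
        ENNReal.ofReal_le_ofReal (le_trans (le_abs_self _) (Real.abs_rpow_le_abs_rpow _ _))
    _ = (ENNReal.ofReal |W ω i|) ^ a := (ENNReal.ofReal_rpow_of_nonneg (abs_nonneg _) ha.le).symm


end TriSRE
end

section
/- For any coordinate ℓ ≤ d and any s ∈ ℕ, the random variable Q_B(s) = Σ_{n=0}^{s−1} Π^{(ℓ)}_n ( B_{ℓ,−n} + Σ_{j: j ▷ ℓ} Σ_{m=1}^{s−n−1} π'_{ℓj}(−n, −n−m+1) B_{j,−n−m} ) has finite moment of order α̃_ℓ: E[Q_B(s)^{α̃_ℓ}] < ∞. -/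
open MeasureTheory ProbabilityTheory Filter Matrix Set
open scoped ENNReal Topology

namespace TriSRE

variable {Ω : Type*} [MeasurableSpace Ω]

private lemma abs_rpow_le_one_add {β γ : ℝ} (hβ : 0 ≤ β) (hle : β ≤ γ) (x : ℝ) :
    |x| ^ β ≤ 1 + |x| ^ γ := by
  rcases le_or_gt |x| 1 with h | h
  · have := Real.rpow_le_one (abs_nonneg x) h hβ
    have h2 : (0:ℝ) ≤ |x| ^ γ := Real.rpow_nonneg (abs_nonneg x) γ
    linarith
  · have := Real.rpow_le_rpow_of_exponent_le h.le hle
    linarith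

/-- If `f ≥ 0` a.e. with integrable `γ`-moment, then `|f|^β` is integrable for `0 < β ≤ γ`. -/
private lemma integrable_abs_rpow_of_moment {μ : Measure Ω} [IsProbabilityMeasure μ]
    {f : Ω → ℝ} (hf : Measurable f) (hnn : ∀ᵐ ω ∂μ, 0 ≤ f ω) {β γ : ℝ}
    (hβ : 0 ≤ β) (hle : β ≤ γ) (hmom : Integrable (fun ω => f ω ^ γ) μ) :
    Integrable (fun ω => |f ω| ^ β) μ := by
  have hmom' : Integrable (fun ω => 1 + |f ω| ^ γ) μ := by
    refine (integrable_const (1:ℝ)).add (hmom.congr ?_)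
    filter_upwards [hnn] with ω hω
    rw [abs_of_nonneg hω]
  refine hmom'.mono' ?_ ?_
  · exact ((Real.continuous_rpow_const hβ).measurable.comp hf.abs).aestronglyMeasurable
  · filter_upwards with ω
    rw [Real.norm_eq_abs, abs_of_nonneg (Real.rpow_nonneg (abs_nonneg _) _)]
    exact abs_rpow_le_one_add hβ hle _

private lemma integrable_abs_rpow_add {μ : Measure Ω} {f g : Ω → ℝ} {β : ℝ} (hβ : 0 ≤ β)
    (hfm : Measurable f) (hgm : Measurable g)
    (hf : Integrable (fun ω => |f ω| ^ β) μ) (hg : Integrable (fun ω => |g ω| ^ β) μ) :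
    Integrable (fun ω => |f ω + g ω| ^ β) μ := by
  have key : ∀ x y : ℝ, |x + y| ^ β ≤ 2 ^ β * (|x| ^ β + |y| ^ β) := by
    intro x y
    have h1 : |x + y| ≤ 2 * max |x| |y| := by
      calc |x + y| ≤ |x| + |y| := abs_add_le x y
        _ ≤ 2 * max |x| |y| := by
          rcases le_total |x| |y| with h | h
          · rw [max_eq_right h]; linarith
          · rw [max_eq_left h]; linarith
    calc |x + y| ^ β ≤ (2 * max |x| |y|) ^ β :=
          Real.rpow_le_rpow (abs_nonneg _) h1 hβ
      _ = 2 ^ β * (max |x| |y|) ^ β := Real.mul_rpow (by norm_num) (le_max_iff.2 (Or.inl (abs_nonneg x)))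
      _ ≤ 2 ^ β * (|x| ^ β + |y| ^ β) := by
          gcongr
          rcases le_total |x| |y| with h | h
          · rw [max_eq_right h]
            have : (0:ℝ) ≤ |x| ^ β := Real.rpow_nonneg (abs_nonneg _) _
            linarith
          · rw [max_eq_left h]
            have : (0:ℝ) ≤ |y| ^ β := Real.rpow_nonneg (abs_nonneg _) _
            linarith
  refine ((hf.add hg).const_mul ((2:ℝ) ^ β)).mono' ?_ ?_
  · exact ((Real.continuous_rpow_const hβ).measurable.comp (hfm.add hgm).abs).aestronglyMeasurable
  · filter_upwards with ω
    rw [Real.norm_eq_abs, abs_of_nonneg (Real.rpow_nonneg (abs_nonneg _) _)]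
    exact key _ _

/-- `f` is a measurable functional of the coordinates `X t, X (t-1), …, X (t-m+1)`. -/
def Obs {G : Type*} [MeasurableSpace G] (X : ℤ → Ω → G) (t : ℤ) (m : ℕ) (f : Ω → ℝ) : Prop :=
  ∃ F : (ℕ → G) → ℝ, Measurable F ∧ (∀ v w : ℕ → G, (∀ k, k < m → v k = w k) → F v = F w) ∧
    ∀ ω, f ω = F fun k => X (t - k) ω

namespace Obs

variable {G : Type*} [MeasurableSpace G] {X : ℤ → Ω → G} {t : ℤ} {m m' : ℕ} {f g : Ω → ℝ}

lemma const (c : ℝ) : Obs X t m (fun _ => c) :=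
  ⟨fun _ => c, measurable_const, fun _ _ _ => rfl, fun _ => rfl⟩

lemma measurable (hX : ∀ u, Measurable (X u)) (hf : Obs X t m f) : Measurable f := by
  obtain ⟨F, hFm, -, hFe⟩ := hf
  have : f = F ∘ fun ω k => X (t - k) ω := funext hFe
  rw [this]
  exact hFm.comp (measurable_pi_lambda _ fun k => hX _)

lemma mono (h : m ≤ m') (hf : Obs X t m f) : Obs X t m' f := by
  obtain ⟨F, hFm, hFd, hFe⟩ := hf
  exact ⟨F, hFm, fun v w hvw => hFd v w (fun k hk => hvw k (hk.trans_le h)), hFe⟩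

lemma add (hf : Obs X t m f) (hg : Obs X t m g) : Obs X t m (fun ω => f ω + g ω) := by
  obtain ⟨F, hFm, hFd, hFe⟩ := hf
  obtain ⟨K, hKm, hKd, hKe⟩ := hg
  exact ⟨fun v => F v + K v, hFm.add hKm,
    fun v w hvw => by show F v + K v = F w + K w; rw [hFd v w hvw, hKd v w hvw],
    fun ω => by show f ω + g ω = _; rw [hFe ω, hKe ω]⟩

lemma mul (hf : Obs X t m f) (hg : Obs X t m g) : Obs X t m (fun ω => f ω * g ω) := by
  obtain ⟨F, hFm, hFd, hFe⟩ := hf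
  obtain ⟨K, hKm, hKd, hKe⟩ := hg
  exact ⟨fun v => F v * K v, hFm.mul hKm,
    fun v w hvw => by show F v * K v = F w * K w; rw [hFd v w hvw, hKd v w hvw],
    fun ω => by show f ω * g ω = _; rw [hFe ω, hKe ω]⟩

lemma sum {ι : Type*} (s : Finset ι) (F : ι → Ω → ℝ) (h : ∀ i ∈ s, Obs X t m (F i)) :
    Obs X t m (fun ω => ∑ i ∈ s, F i ω) := by
  classical
  induction s using Finset.induction with
  | empty => simpa using const 0
  | insert a s hnotmem ih =>
    simp only [Finset.sum_insert hnotmem]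
    exact (h a (Finset.mem_insert_self a s)).add
      (ih fun i hi => h i (Finset.mem_insert_of_mem hi))

lemma of_comp (g : G → ℝ) (hg : Measurable g) : Obs X t 1 (fun ω => g (X t ω)) := by
  refine ⟨fun v => g (v 0), hg.comp (measurable_pi_apply 0), fun v w hvw => by
    show g (v 0) = g (w 0); rw [hvw 0 one_pos], fun ω => ?_⟩
  norm_num

lemma shift (hg : Obs X (t - m) m' g) : Obs X t (m + m') g := by
  obtain ⟨F, hFm, hFd, hFe⟩ := hg
  refine ⟨fun v => F (fun k => v (m + k)),
    hFm.comp (measurable_pi_lambda _ fun k => measurable_pi_apply _),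
    fun v w hvw => hFd _ _ (fun k hk => hvw (m + k) (by omega)), fun ω => ?_⟩
  rw [hFe ω]
  congr 1 with k
  congr 1
  push_cast
  ring

lemma mulBlock (hf : Obs X t m f) (hg : Obs X (t - m) m' g) :
    Obs X t (m + m') (fun ω => f ω * g ω) :=
  (hf.mono (Nat.le_add_right _ _)).mul hg.shift

end Obs


section Indep
variable {G : Type*} [MeasurableSpace G] [Inhabited G] {X : ℤ → Ω → G} {t : ℤ} {m m' : ℕ}
  {f g : Ω → ℝ} {μ : Measure Ω}

lemma Obs.indepFun (hX : ∀ u, Measurable (X u))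
    (hind : iIndepFun X μ)
    (hf : Obs X t m f) (hg : Obs X (t - m) m' g) : IndepFun f g μ := by
  classical
  obtain ⟨F, hFm, hFd, hFe⟩ := hf
  obtain ⟨K, hKm, hKd, hKe⟩ := hg
  set S : Finset ℤ := (Finset.range m).image (fun k : ℕ => t - (k : ℤ)) with hS
  set T : Finset ℤ := (Finset.range m').image (fun k : ℕ => t - (m : ℤ) - (k : ℤ)) with hT
  have hST : Disjoint S T := by
    rw [Finset.disjoint_left]
    rintro x hxS hxT
    simp only [hS, hT, Finset.mem_image, Finset.mem_range] at hxS hxT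
    obtain ⟨k, hk, rfl⟩ := hxS
    obtain ⟨k', hk', he⟩ := hxT
    omega
  have base := hind.indepFun_finset S T hST hX
  have hmemS : ∀ k : ℕ, k < m → (t - (k : ℤ)) ∈ S := by
    intro k hk; simp only [hS, Finset.mem_image, Finset.mem_range]; exact ⟨k, hk, rfl⟩
  have hmemT : ∀ k : ℕ, k < m' → (t - (m : ℤ) - (k : ℤ)) ∈ T := by
    intro k hk; simp only [hT, Finset.mem_image, Finset.mem_range]; exact ⟨k, hk, rfl⟩
  set φ : (S → G) → ℝ := fun v => F (fun k => if h : k < m then v ⟨t - k, hmemS k h⟩ else default)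
    with hφdef
  set ψ : (T → G) → ℝ := fun v => K (fun k => if h : k < m' then v ⟨t - m - k, hmemT k h⟩ else default)
    with hψdef
  have hφ : Measurable φ := by
    apply hFm.comp
    apply measurable_pi_lambda
    intro k
    by_cases h : k < m <;> simp only [h, dif_pos, dif_neg, not_false_iff]
    · exact measurable_pi_apply _
    · exact measurable_const
  have hψ : Measurable ψ := by
    apply hKm.comp
    apply measurable_pi_lambda
    intro k
    by_cases h : k < m' <;> simp only [h, dif_pos, dif_neg, not_false_iff]
    · exact measurable_pi_apply _
    · exact measurable_const
  have hcomp := base.comp hφ hψ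
  have hfe : f = φ ∘ fun a (i : S) => X i a := by
    funext ω
    rw [hFe ω]
    exact hFd _ _ (fun k hk => by simp [hk])
  have hge : g = ψ ∘ fun a (i : T) => X i a := by
    funext ω
    rw [hKe ω]
    exact hKd _ _ (fun k hk => by simp [hk])
  rw [hfe, hge]
  exact hcomp

lemma integrable_abs_rpow_mul {β : ℝ} (hβ : 0 ≤ β) (hX : ∀ u, Measurable (X u))
    (hind : iIndepFun X μ)
    (hf : Obs X t m f) (hg : Obs X (t - m) m' g)
    (hfi : Integrable (fun ω => |f ω| ^ β) μ) (hgi : Integrable (fun ω => |g ω| ^ β) μ) :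
    Integrable (fun ω => |f ω * g ω| ^ β) μ := by
  have hI : IndepFun f g μ := hf.indepFun hX hind hg
  have hm : Measurable fun x : ℝ => |x| ^ β :=
    (Real.continuous_rpow_const hβ).measurable.comp measurable_abs
  have hI2 : IndepFun (fun ω => |f ω| ^ β) (fun ω => |g ω| ^ β) μ := hI.comp hm hm
  have := hI2.integrable_mul hfi hgi
  refine this.congr (Filter.Eventually.of_forall fun ω => ?_)
  show |f ω| ^ β * |g ω| ^ β = |f ω * g ω| ^ β
  rw [abs_mul, Real.mul_rpow (abs_nonneg _) (abs_nonneg _)]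

end Indep

private lemma integrable_abs_rpow_sum {μ : Measure Ω} [IsFiniteMeasure μ] {ι : Type*} {β : ℝ} (hβ : 0 ≤ β)
    (s : Finset ι) (F : ι → Ω → ℝ) (hm : ∀ i ∈ s, Measurable (F i))
    (hi : ∀ i ∈ s, Integrable (fun ω => |F i ω| ^ β) μ) :
    Integrable (fun ω => |∑ i ∈ s, F i ω| ^ β) μ := by
  classical
  induction s using Finset.induction with
  | empty => simpa using integrable_const (|(0:ℝ)| ^ β)
  | insert a s hnotmem ih =>
    simp only [Finset.sum_insert hnotmem]
    refine integrable_abs_rpow_add hβ (hm a (Finset.mem_insert_self a s))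
      (Finset.measurable_sum s fun i hi' => hm i (Finset.mem_insert_of_mem hi'))
      (hi a (Finset.mem_insert_self a s))
      (ih (fun i hi' => hm i (Finset.mem_insert_of_mem hi'))
        (fun i hi' => hi i (Finset.mem_insert_of_mem hi')))


variable {d : ℕ}

/-- `PiProd A t n = A_t · A_{t-1} ⋯ A_{t-n+1}` (the product `Π_{t, t-n+1}` of `n` factors);
in particular `PiProd A 0 n = Π_n`. -/
noncomputable def PiProd (A : ℤ → Ω → Matrix (Fin d) (Fin d) ℝ) (t : ℤ) :
    ℕ → Ω → Matrix (Fin d) (Fin d) ℝ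
  | 0 => fun _ => 1
  | n + 1 => fun ω => PiProd A t n ω * A (t - n) ω

/-- `diagProd A i t n = A_{ii,t} · A_{ii,t-1} ⋯ A_{ii,t-n+1}` (the diagonal product
`Π^{(i)}_{t,t-n+1}`); in particular `diagProd A i 0 n = Π^{(i)}_n`. -/
noncomputable def diagProd (A : ℤ → Ω → Matrix (Fin d) (Fin d) ℝ) (i : Fin d) (t : ℤ) :
    ℕ → Ω → ℝ
  | 0 => fun _ => 1
  | n + 1 => fun ω => diagProd A i t n ω * A (t - n) ω i i

/-- The stationary solution process `W_t = Σ_{n=0}^∞ Π_{t,t+1-n} B_{t-n}`. -/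
noncomputable def Wproc (A : ℤ → Ω → Matrix (Fin d) (Fin d) ℝ) (B : ℤ → Ω → Fin d → ℝ)
    (t : ℤ) (ω : Ω) : Fin d → ℝ :=
  ∑' n : ℕ, PiProd A t n ω *ᵥ B (t - n) ω

/-- `(A_t, B_t)_{t ∈ ℤ}` is an i.i.d. sequence (with generic element `(A 0, B 0)`). -/
def IIDCopies (μ : Measure Ω) (A : ℤ → Ω → Matrix (Fin d) (Fin d) ℝ)
    (B : ℤ → Ω → Fin d → ℝ) : Prop :=
  (∀ t i j, Measurable fun ω => A t ω i j) ∧ (∀ t i, Measurable fun ω => B t ω i) ∧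
  iIndepFun
    (fun t ω => (Matrix.of.symm (A t ω), B t ω)) μ ∧
  ∀ t : ℤ, μ.map (fun ω => (Matrix.of.symm (A t ω), B t ω))
    = μ.map (fun ω => (Matrix.of.symm (A 0 ω), B 0 ω))

open scoped Classical in
/-- `D_{i,t} = Σ_{j : j ≻ i} A_{ij,t} W_{j,t-1} + B_{i,t}`. -/
noncomputable def Dterm (μ : Measure Ω) (A : ℤ → Ω → Matrix (Fin d) (Fin d) ℝ)
    (B : ℤ → Ω → Fin d → ℝ) (i : Fin d) (t : ℤ) (ω : Ω) : ℝ :=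
  (∑ j ∈ Finset.univ.filter fun j => DirectDep μ (A 0) i j ∧ i ≠ j,
      A t ω i j * Wproc A B (t - 1) ω j) + B t ω i

/-- `A⁰_t` : the matrix `A_t` with the diagonal replaced by zeros. -/
noncomputable def Azero (A : ℤ → Ω → Matrix (Fin d) (Fin d) ℝ) (t : ℤ) (ω : Ω) :
    Matrix (Fin d) (Fin d) ℝ :=
  Matrix.of fun i j => if i = j then 0 else A t ω i j

/-- The matrix of the `π'_{ij}(t, t-m+1)` (`m ≥ 1` factors): `A⁰_t · Π_{t-1, t-m+1}`. -/
noncomputable def piPrime (A : ℤ → Ω → Matrix (Fin d) (Fin d) ℝ) (t : ℤ) (m : ℕ)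
    (ω : Ω) : Matrix (Fin d) (Fin d) ℝ :=
  Azero A t ω * PiProd A (t - 1) (m - 1) ω

-- problem-specific auxiliary defs/lemmas, to be inserted above the theorem

/-- The coordinate process of the i.i.d. sequence. -/
noncomputable def Xp (A : ℤ → Ω → Matrix (Fin d) (Fin d) ℝ) (B : ℤ → Ω → Fin d → ℝ)
    (t : ℤ) (ω : Ω) : (Fin d → Fin d → ℝ) × (Fin d → ℝ) :=
  (Matrix.of.symm (A t ω), B t ω)

open scoped Classical in
/-- `A` with the entries that are a.s. zero (off-diagonal, non-dependent) replaced by `0`. -/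
noncomputable def hatA (μ : Measure Ω) (A : ℤ → Ω → Matrix (Fin d) (Fin d) ℝ)
    (t : ℤ) (ω : Ω) : Matrix (Fin d) (Fin d) ℝ :=
  Matrix.of fun i j => if i = j ∨ DirectDep μ (A 0) i j then A t ω i j else 0

lemma PiProd_congr {A A' : ℤ → Ω → Matrix (Fin d) (Fin d) ℝ} {ω : Ω}
    (h : ∀ u, A u ω = A' u ω) :
    ∀ (t : ℤ) (m : ℕ), PiProd A t m ω = PiProd A' t m ω := by
  intro t m
  induction m with
  | zero => rfl
  | succ m ih =>
    show PiProd A t m ω * A (t - m) ω = PiProd A' t m ω * A' (t - m) ω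
    rw [ih, h]

lemma PiProd_hatA_zero (μ : Measure Ω) (A : ℤ → Ω → Matrix (Fin d) (Fin d) ℝ) (i : Fin d) :
    ∀ (m : ℕ) (t : ℤ) (ω : Ω) (k : Fin d), ¬ Dep μ (A 0) i k →
      PiProd (hatA μ A) t m ω i k = 0 := by
  intro m
  induction m with
  | zero =>
    intro t ω k hk
    show (1 : Matrix (Fin d) (Fin d) ℝ) i k = 0
    refine Matrix.one_apply_ne fun h => ?_
    exact hk (h ▸ Relation.ReflTransGen.refl)
  | succ m ih =>
    intro t ω k hk
    show (PiProd (hatA μ A) t m ω * hatA μ A (t - m) ω) i k = 0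
    rw [Matrix.mul_apply]
    refine Finset.sum_eq_zero fun r _ => ?_
    by_cases hir : Dep μ (A 0) i r
    · have hrk : ¬ (r = k ∨ DirectDep μ (A 0) r k) := by
        rintro (rfl | hD)
        · exact hk hir
        · exact hk (hir.tail hD)
      have : hatA μ A (t - m) ω r k = 0 := by
        simp only [hatA, Matrix.of_apply, if_neg hrk]
      rw [this, mul_zero]
    · rw [ih t ω r hir, zero_mul]

open scoped Classical in
/-- Lemma 5.3, moment bound: `E[Q_B(s)^{α̃ ℓ}] < ∞`. -/
theorem QB_moment_finite
    (μ : Measure Ω) [IsProbabilityMeasure μ] (hd : 1 ≤ d)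
    (A : ℤ → Ω → Matrix (Fin d) (Fin d) ℝ) (B : ℤ → Ω → Fin d → ℝ) (α : Fin d → ℝ)
    (hiid : IIDCopies μ A B) (hT : CondT μ (A 0) (B 0) α) :
    ∀ ℓ : Fin d, ∀ s : ℕ,
      ∫⁻ ω, ENNReal.ofReal
        ((∑ n ∈ Finset.range s, diagProd A ℓ 0 n ω *
            (B (-(n : ℤ)) ω ℓ +
              ∑ j ∈ Finset.univ.filter (fun j => Dep μ (A 0) ℓ j ∧ ℓ ≠ j),
                ∑ m ∈ Finset.Icc 1 (s - n - 1),
                  piPrime A (-(n : ℤ)) m ω ℓ j * B (-(n : ℤ) - m) ω j))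
          ^ tildeAlpha μ (A 0) α ℓ) ∂μ < ⊤ := by
  classical
  intro ℓ s
  obtain ⟨hmA, hmB, hind, hmap⟩ := hiid
  set β := tildeAlpha μ (A 0) α ℓ with hβdef
  -- basic facts about the modified tail index
  have hfin : {a : ℝ | ∃ j, Dep μ (A 0) ℓ j ∧ a = α j}.Finite :=
    (Set.finite_range α).subset (by rintro a ⟨j, -, rfl⟩; exact Set.mem_range_self j)
  have hne : {a : ℝ | ∃ j, Dep μ (A 0) ℓ j ∧ a = α j}.Nonempty :=
    ⟨α ℓ, ℓ, Relation.ReflTransGen.refl, rfl⟩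
  have hmem : β ∈ {a : ℝ | ∃ j, Dep μ (A 0) ℓ j ∧ a = α j} := hne.csInf_mem hfin
  have hβpos : 0 < β := by
    obtain ⟨j0, -, h⟩ := hmem
    exact h ▸ hT.alpha_pos j0
  have hβ0 : (0:ℝ) ≤ β := hβpos.le
  have hβle : ∀ j, Dep μ (A 0) ℓ j → β ≤ α j := fun j hj =>
    csInf_le hfin.bddBelow ⟨j, hj, rfl⟩
  -- the i.i.d. coordinate process
  set X := Xp A B with hXdef
  have hX : ∀ t, Measurable (X t) := fun t =>
    Measurable.prod
      (measurable_pi_lambda _ fun i => measurable_pi_lambda _ fun j => hmA t i j)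
      (measurable_pi_lambda _ fun i => hmB t i)
  have hindX : iIndepFun X μ := hind
  have hmapX : ∀ t, μ.map (X t) = μ.map (X 0) := hmap
  -- transfer of integrability from time 0 to time t
  have htrans : ∀ (t : ℤ) (g : (Fin d → Fin d → ℝ) × (Fin d → ℝ) → ℝ), Measurable g →
      Integrable (fun ω => g (X 0 ω)) μ → Integrable (fun ω => g (X t ω)) μ := by
    intro t g hg h0
    have h1 : Integrable g (μ.map (X 0)) :=
      (integrable_map_measure hg.aestronglyMeasurable (hX 0).aemeasurable).2 h0
    rw [← hmapX t] at h1
    exact (integrable_map_measure hg.aestronglyMeasurable (hX t).aemeasurable).1 h1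
  have hIntA : ∀ (t : ℤ) (i j : Fin d), β ≤ α i →
      Integrable (fun ω => |A t ω i j| ^ β) μ := by
    intro t i j hle
    have hg : Measurable fun e : (Fin d → Fin d → ℝ) × (Fin d → ℝ) => |e.1 i j| ^ β :=
      (Real.continuous_rpow_const hβ0).measurable.comp
        ((measurable_pi_apply j).comp ((measurable_pi_apply i).comp measurable_fst)).abs
    exact htrans t _ hg
      (integrable_abs_rpow_of_moment (hmA 0 i j) (hT.nonnegA i j) hβ0 hle (hT.A_moment i j))
  have hIntB : ∀ (t : ℤ) (j : Fin d), β ≤ α j →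
      Integrable (fun ω => |B t ω j| ^ β) μ := by
    intro t j hle
    have hg : Measurable fun e : (Fin d → Fin d → ℝ) × (Fin d → ℝ) => |e.2 j| ^ β :=
      (Real.continuous_rpow_const hβ0).measurable.comp
        ((measurable_pi_apply j).comp measurable_snd).abs
    exact htrans t _ hg
      (integrable_abs_rpow_of_moment (hmB 0 j) (hT.nonnegB j) hβ0 hle (hT.B_moment j))
  -- a.s. vanishing of non-dependent entries, at every time
  have hzero : ∀ (t : ℤ) (i j : Fin d), ¬ (i = j ∨ DirectDep μ (A 0) i j) →
      ∀ᵐ ω ∂μ, A t ω i j = 0 := by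
    intro t i j hc
    have hD : μ {ω | 0 < A 0 ω i j} = 0 := by
      by_contra h
      exact hc (Or.inr (lt_of_le_of_ne (zero_le) (Ne.symm h)))
    have h0 : ∀ᵐ ω ∂μ, A 0 ω i j = 0 := by
      have h1 : ∀ᵐ ω ∂μ, ¬ (0 < A 0 ω i j) := by
        rw [ae_iff]; simpa using hD
      filter_upwards [h1, hT.nonnegA i j] with ω hω1 hω2
      exact le_antisymm (not_lt.mp hω1) hω2
    have hgm : Measurable fun e : (Fin d → Fin d → ℝ) × (Fin d → ℝ) => e.1 i j :=
      (measurable_pi_apply j).comp ((measurable_pi_apply i).comp measurable_fst)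
    have hCm : MeasurableSet {e : (Fin d → Fin d → ℝ) × (Fin d → ℝ) | ¬ e.1 i j = 0} := by
      simpa [Set.compl_setOf] using (measurableSet_eq_fun hgm measurable_const).compl
    rw [ae_iff]
    rw [ae_iff] at h0
    calc μ {ω | ¬ A t ω i j = 0}
        = μ (X t ⁻¹' {e | ¬ e.1 i j = 0}) := rfl
      _ = μ.map (X t) {e | ¬ e.1 i j = 0} := (Measure.map_apply (hX t) hCm).symm
      _ = μ.map (X 0) {e | ¬ e.1 i j = 0} := by rw [hmapX t]
      _ = μ (X 0 ⁻¹' {e | ¬ e.1 i j = 0}) := Measure.map_apply (hX 0) hCm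
      _ = 0 := h0
  -- elementary observables
  have hObsA : ∀ (t : ℤ) (i j : Fin d), Obs X t 1 (fun ω => A t ω i j) := fun t i j =>
    Obs.of_comp (fun e : (Fin d → Fin d → ℝ) × (Fin d → ℝ) => e.1 i j)
      ((measurable_pi_apply j).comp ((measurable_pi_apply i).comp measurable_fst))
  have hObsB : ∀ (t : ℤ) (j : Fin d), Obs X t 1 (fun ω => B t ω j) := fun t j =>
    Obs.of_comp (fun e : (Fin d → Fin d → ℝ) × (Fin d → ℝ) => e.2 j)
      ((measurable_pi_apply j).comp measurable_snd)
  -- matrix products of the truncated matrices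
  have IntPi : ∀ (m : ℕ) (t : ℤ) (i j : Fin d), Dep μ (A 0) ℓ i →
      Obs X t m (fun ω => PiProd (hatA μ A) t m ω i j) ∧
        Integrable (fun ω => |PiProd (hatA μ A) t m ω i j| ^ β) μ := by
    intro m
    induction m with
    | zero =>
      intro t i j _
      have he : ∀ ω : Ω, PiProd (hatA μ A) t 0 ω i j
          = (1 : Matrix (Fin d) (Fin d) ℝ) i j := fun _ => rfl
      simp only [he]
      exact ⟨Obs.const _, integrable_const _⟩
    | succ m ih =>
      intro t i j hi
      have he : ∀ ω : Ω, PiProd (hatA μ A) t (m+1) ω i j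
          = ∑ r : Fin d,
              PiProd (hatA μ A) t m ω i r * hatA μ A (t - m) ω r j := fun ω =>
        Matrix.mul_apply
      simp only [he]
      have hterm : ∀ r : Fin d,
          Obs X t (m+1) (fun ω => PiProd (hatA μ A) t m ω i r * hatA μ A (t - m) ω r j) ∧
            Integrable (fun ω =>
              |PiProd (hatA μ A) t m ω i r * hatA μ A (t - m) ω r j| ^ β) μ := by
        intro r
        by_cases hir : Dep μ (A 0) i r
        · by_cases hrj : r = j ∨ DirectDep μ (A 0) r j
          · have hAe : ∀ ω : Ω, hatA μ A (t - m) ω r j = A (t - m) ω r j := by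
              intro ω; simp only [hatA, Matrix.of_apply, if_pos hrj]
            have hObs2 : Obs X (t - m) 1 (fun ω => hatA μ A (t - m) ω r j) := by
              simp only [hAe]; exact hObsA (t - m) r j
            have hInt2 : Integrable (fun ω => |hatA μ A (t - m) ω r j| ^ β) μ := by
              simp only [hAe]; exact hIntA (t - m) r j (hβle r (hi.trans hir))
            exact ⟨((ih t i r hi).1).mulBlock hObs2,
              integrable_abs_rpow_mul hβ0 hX hindX (ih t i r hi).1 hObs2 (ih t i r hi).2 hInt2⟩
          · have hz : ∀ ω : Ω,
                PiProd (hatA μ A) t m ω i r * hatA μ A (t - m) ω r j = 0 := by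
              intro ω
              simp only [hatA, Matrix.of_apply, if_neg hrj, mul_zero]
            simp only [hz]
            exact ⟨Obs.const 0, by simpa using integrable_const (|(0:ℝ)| ^ β)⟩
        · have hz : ∀ ω : Ω,
              PiProd (hatA μ A) t m ω i r * hatA μ A (t - m) ω r j = 0 := by
            intro ω
            rw [PiProd_hatA_zero μ A i m t ω r hir, zero_mul]
          simp only [hz]
          exact ⟨Obs.const 0, by simpa using integrable_const (|(0:ℝ)| ^ β)⟩
      refine ⟨Obs.sum Finset.univ _ (fun r _ => (hterm r).1), ?_⟩
      exact integrable_abs_rpow_sum hβ0 Finset.univ _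
        (fun r _ => ((hterm r).1).measurable hX) (fun r _ => (hterm r).2)
  -- diagonal products
  have IntDiag : ∀ n : ℕ,
      Obs X 0 n (fun ω => diagProd A ℓ 0 n ω) ∧
        Integrable (fun ω => |diagProd A ℓ 0 n ω| ^ β) μ := by
    intro n
    induction n with
    | zero =>
      have he : ∀ ω : Ω, diagProd A ℓ 0 0 ω = (1:ℝ) := fun _ => rfl
      simp only [he]
      exact ⟨Obs.const _, integrable_const _⟩
    | succ n ihn =>
      have he : ∀ ω : Ω, diagProd A ℓ 0 (n+1) ω
          = diagProd A ℓ 0 n ω * A (0 - n) ω ℓ ℓ := fun _ => rfl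
      simp only [he]
      have hβℓ : β ≤ α ℓ := hβle ℓ Relation.ReflTransGen.refl
      exact ⟨ihn.1.mulBlock (hObsA ((0:ℤ) - n) ℓ ℓ),
        integrable_abs_rpow_mul hβ0 hX hindX ihn.1 (hObsA ((0:ℤ) - n) ℓ ℓ) ihn.2
          (hIntA ((0:ℤ) - n) ℓ ℓ hβℓ)⟩
  -- πʹ entries
  have IntPiP : ∀ (t : ℤ) (m : ℕ), 1 ≤ m → ∀ j : Fin d, Dep μ (A 0) ℓ j →
      Obs X t m (fun ω => piPrime (hatA μ A) t m ω ℓ j) ∧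
        Integrable (fun ω => |piPrime (hatA μ A) t m ω ℓ j| ^ β) μ := by
    intro t m hm j hj
    have he : ∀ ω : Ω, piPrime (hatA μ A) t m ω ℓ j
        = ∑ k : Fin d,
            Azero (hatA μ A) t ω ℓ k * PiProd (hatA μ A) (t - 1) (m - 1) ω k j := fun ω =>
      Matrix.mul_apply
    simp only [he]
    have hterm : ∀ k : Fin d,
        Obs X t m (fun ω =>
            Azero (hatA μ A) t ω ℓ k * PiProd (hatA μ A) (t - 1) (m - 1) ω k j) ∧
          Integrable (fun ω =>
            |Azero (hatA μ A) t ω ℓ k * PiProd (hatA μ A) (t - 1) (m - 1) ω k j| ^ β) μ := by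
      intro k
      by_cases hk : ℓ ≠ k ∧ DirectDep μ (A 0) ℓ k
      · have hAe : ∀ ω : Ω, Azero (hatA μ A) t ω ℓ k = A t ω ℓ k := by
          intro ω
          simp only [Azero, hatA, Matrix.of_apply, if_neg hk.1, if_pos (Or.inr hk.2)]
        have hℓk : Dep μ (A 0) ℓ k := Relation.ReflTransGen.single hk.2
        have h2 := IntPi (m - 1) (t - 1) k j hℓk
        have h1 : Obs X t 1 (fun ω => Azero (hatA μ A) t ω ℓ k) := by
          simp only [hAe]; exact hObsA t ℓ k
        have h1i : Integrable (fun ω => |Azero (hatA μ A) t ω ℓ k| ^ β) μ := by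
          simp only [hAe]; exact hIntA t ℓ k (hβle ℓ Relation.ReflTransGen.refl)
        have h2s : Obs X (t - (1:ℕ)) (m - 1)
            (fun ω => PiProd (hatA μ A) (t - 1) (m - 1) ω k j) := by
          simpa using h2.1
        have hObsmul := h1.mulBlock h2s
        rw [Nat.add_sub_cancel' hm] at hObsmul
        have h2i : Obs X (t - (1:ℕ)) (m - 1)
            (fun ω => PiProd (hatA μ A) (t - 1) (m - 1) ω k j) := h2s
        exact ⟨hObsmul, integrable_abs_rpow_mul hβ0 hX hindX h1 h2i h1i h2.2⟩
      · have hz : ∀ ω : Ω,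
            Azero (hatA μ A) t ω ℓ k * PiProd (hatA μ A) (t - 1) (m - 1) ω k j
            = 0 := by
          intro ω
          rcases Classical.em (ℓ = k) with hc | hc
          · simp only [Azero, Matrix.of_apply, if_pos hc, zero_mul]
          · have hnd : ¬ DirectDep μ (A 0) ℓ k := fun h => hk ⟨hc, h⟩
            have hcond : ¬ (ℓ = k ∨ DirectDep μ (A 0) ℓ k) := by
              rintro (h | h); exacts [hc h, hnd h]
            simp only [Azero, hatA, Matrix.of_apply, if_neg hc, if_neg hcond, zero_mul]
        simp only [hz]
        exact ⟨Obs.const 0, by simpa using integrable_const (|(0:ℝ)| ^ β)⟩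
    refine ⟨Obs.sum Finset.univ _ (fun k _ => (hterm k).1), ?_⟩
    exact integrable_abs_rpow_sum hβ0 Finset.univ _
      (fun k _ => ((hterm k).1).measurable hX) (fun k _ => (hterm k).2)
  -- the inner expression at step n
  have hinner : ∀ n : ℕ,
      Obs X (-(n:ℤ)) (s + 1) (fun ω =>
          B (-(n:ℤ)) ω ℓ +
            ∑ j ∈ Finset.univ.filter (fun j => Dep μ (A 0) ℓ j ∧ ℓ ≠ j),
              ∑ m ∈ Finset.Icc 1 (s - n - 1),
                piPrime (hatA μ A) (-(n:ℤ)) m ω ℓ j * B (-(n:ℤ) - m) ω j) ∧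
        Integrable (fun ω =>
          |B (-(n:ℤ)) ω ℓ +
            ∑ j ∈ Finset.univ.filter (fun j => Dep μ (A 0) ℓ j ∧ ℓ ≠ j),
              ∑ m ∈ Finset.Icc 1 (s - n - 1),
                piPrime (hatA μ A) (-(n:ℤ)) m ω ℓ j * B (-(n:ℤ) - m) ω j| ^ β) μ := by
    intro n
    have hterm : ∀ j ∈ Finset.univ.filter (fun j => Dep μ (A 0) ℓ j ∧ ℓ ≠ j),
        ∀ m ∈ Finset.Icc 1 (s - n - 1),
        Obs X (-(n:ℤ)) (s + 1)
            (fun ω => piPrime (hatA μ A) (-(n:ℤ)) m ω ℓ j * B (-(n:ℤ) - m) ω j) ∧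
          Integrable (fun ω =>
            |piPrime (hatA μ A) (-(n:ℤ)) m ω ℓ j * B (-(n:ℤ) - m) ω j| ^ β) μ := by
      intro j hjmem m hmmem
      obtain ⟨-, hdep, -⟩ : j ∈ Finset.univ ∧ Dep μ (A 0) ℓ j ∧ ℓ ≠ j := by
        simpa [Finset.mem_filter, and_assoc] using hjmem
      obtain ⟨hm1, hm2⟩ := Finset.mem_Icc.mp hmmem
      have hp := IntPiP (-(n:ℤ)) m hm1 j hdep
      have hb : Obs X (-(n:ℤ) - m) 1 (fun ω => B (-(n:ℤ) - m) ω j) := hObsB _ j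
      have hbi : Integrable (fun ω => |B (-(n:ℤ) - m) ω j| ^ β) μ := hIntB _ j (hβle j hdep)
      refine ⟨(hp.1.mulBlock hb).mono (by omega), ?_⟩
      exact integrable_abs_rpow_mul hβ0 hX hindX hp.1 hb hp.2 hbi
    have hsum : Obs X (-(n:ℤ)) (s + 1) (fun ω =>
          ∑ j ∈ Finset.univ.filter (fun j => Dep μ (A 0) ℓ j ∧ ℓ ≠ j),
            ∑ m ∈ Finset.Icc 1 (s - n - 1),
              piPrime (hatA μ A) (-(n:ℤ)) m ω ℓ j * B (-(n:ℤ) - m) ω j) ∧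
        Integrable (fun ω =>
          |∑ j ∈ Finset.univ.filter (fun j => Dep μ (A 0) ℓ j ∧ ℓ ≠ j),
            ∑ m ∈ Finset.Icc 1 (s - n - 1),
              piPrime (hatA μ A) (-(n:ℤ)) m ω ℓ j * B (-(n:ℤ) - m) ω j| ^ β) μ := by
      constructor
      · exact Obs.sum _ _ (fun j hj => Obs.sum _ _ (fun m hm => (hterm j hj m hm).1))
      · refine integrable_abs_rpow_sum hβ0 _ _ (fun j hj => ?_) (fun j hj => ?_)
        · exact (Obs.sum _ _ (fun m hm => (hterm j hj m hm).1)).measurable hX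
        · exact integrable_abs_rpow_sum hβ0 _ _
            (fun m hm => ((hterm j hj m hm).1).measurable hX)
            (fun m hm => (hterm j hj m hm).2)
    have hBpart : Obs X (-(n:ℤ)) (s + 1) (fun ω => B (-(n:ℤ)) ω ℓ) :=
      (hObsB (-(n:ℤ)) ℓ).mono (by omega)
    refine ⟨hBpart.add hsum.1, ?_⟩
    exact integrable_abs_rpow_add hβ0 (hmB _ ℓ) (hsum.1.measurable hX)
      (hIntB _ ℓ (hβle ℓ Relation.ReflTransGen.refl)) hsum.2
  -- the full summand at step n
  have hout : ∀ n : ℕ,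
      Measurable (fun ω => diagProd A ℓ 0 n ω *
          (B (-(n:ℤ)) ω ℓ +
            ∑ j ∈ Finset.univ.filter (fun j => Dep μ (A 0) ℓ j ∧ ℓ ≠ j),
              ∑ m ∈ Finset.Icc 1 (s - n - 1),
                piPrime (hatA μ A) (-(n:ℤ)) m ω ℓ j * B (-(n:ℤ) - m) ω j)) ∧
        Integrable (fun ω =>
          |diagProd A ℓ 0 n ω *
            (B (-(n:ℤ)) ω ℓ +
              ∑ j ∈ Finset.univ.filter (fun j => Dep μ (A 0) ℓ j ∧ ℓ ≠ j),
                ∑ m ∈ Finset.Icc 1 (s - n - 1),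
                  piPrime (hatA μ A) (-(n:ℤ)) m ω ℓ j * B (-(n:ℤ) - m) ω j)| ^ β) μ := by
    intro n
    have hg' : Obs X ((0:ℤ) - n) (s + 1) (fun ω =>
        B (-(n:ℤ)) ω ℓ +
          ∑ j ∈ Finset.univ.filter (fun j => Dep μ (A 0) ℓ j ∧ ℓ ≠ j),
            ∑ m ∈ Finset.Icc 1 (s - n - 1),
              piPrime (hatA μ A) (-(n:ℤ)) m ω ℓ j * B (-(n:ℤ) - m) ω j) := by
      rw [show ((0:ℤ) - (n:ℕ)) = -(n:ℤ) by push_cast; ring]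
      exact (hinner n).1
    constructor
    · exact ((IntDiag n).1.measurable hX).mul (hg'.measurable hX)
    · exact integrable_abs_rpow_mul hβ0 hX hindX (IntDiag n).1 hg' (IntDiag n).2 (hinner n).2
  -- the truncated Q is integrable to the power β
  have hQH : Integrable (fun ω =>
      |∑ n ∈ Finset.range s, diagProd A ℓ 0 n ω *
          (B (-(n:ℤ)) ω ℓ +
            ∑ j ∈ Finset.univ.filter (fun j => Dep μ (A 0) ℓ j ∧ ℓ ≠ j),
              ∑ m ∈ Finset.Icc 1 (s - n - 1),
                piPrime (hatA μ A) (-(n:ℤ)) m ω ℓ j * B (-(n:ℤ) - m) ω j)| ^ β) μ :=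
    integrable_abs_rpow_sum hβ0 _ _ (fun n _ => (hout n).1) (fun n _ => (hout n).2)
  -- almost everywhere, `A` agrees with `hatA`
  have hAhat : ∀ᵐ ω ∂μ, ∀ t : ℤ, A t ω = hatA μ A t ω := by
    rw [ae_all_iff]
    intro t
    have h1 : ∀ᵐ ω ∂μ, ∀ i j : Fin d, A t ω i j = hatA μ A t ω i j := by
      rw [ae_all_iff]
      intro i
      rw [ae_all_iff]
      intro j
      by_cases hc : i = j ∨ DirectDep μ (A 0) i j
      · filter_upwards with ω
        simp only [hatA, Matrix.of_apply, if_pos hc]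
      · filter_upwards [hzero t i j hc] with ω hω
        simp only [hatA, Matrix.of_apply, if_neg hc, hω]
    filter_upwards [h1] with ω hω
    ext i j
    exact hω i j
  -- hence the original Q agrees a.e. with the truncated one
  have hQeq : ∀ᵐ ω ∂μ,
      (∑ n ∈ Finset.range s, diagProd A ℓ 0 n ω *
          (B (-(n:ℤ)) ω ℓ +
            ∑ j ∈ Finset.univ.filter (fun j => Dep μ (A 0) ℓ j ∧ ℓ ≠ j),
              ∑ m ∈ Finset.Icc 1 (s - n - 1),
                piPrime A (-(n:ℤ)) m ω ℓ j * B (-(n:ℤ) - m) ω j))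
      = ∑ n ∈ Finset.range s, diagProd A ℓ 0 n ω *
          (B (-(n:ℤ)) ω ℓ +
            ∑ j ∈ Finset.univ.filter (fun j => Dep μ (A 0) ℓ j ∧ ℓ ≠ j),
              ∑ m ∈ Finset.Icc 1 (s - n - 1),
                piPrime (hatA μ A) (-(n:ℤ)) m ω ℓ j * B (-(n:ℤ) - m) ω j) := by
    filter_upwards [hAhat] with ω hω
    have hpp : ∀ (u : ℤ) (m : ℕ), piPrime A u m ω = piPrime (hatA μ A) u m ω := by
      intro u m
      unfold piPrime
      rw [PiProd_congr hω, show Azero A u ω = Azero (hatA μ A) u ω by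
        unfold Azero; rw [hω u]]
    refine Finset.sum_congr rfl fun n _ => ?_
    congr 1
    refine congrArg _ ?_
    refine Finset.sum_congr rfl fun j _ => Finset.sum_congr rfl fun m _ => ?_
    rw [hpp]
  have hQint : Integrable (fun ω =>
      |∑ n ∈ Finset.range s, diagProd A ℓ 0 n ω *
          (B (-(n:ℤ)) ω ℓ +
            ∑ j ∈ Finset.univ.filter (fun j => Dep μ (A 0) ℓ j ∧ ℓ ≠ j),
              ∑ m ∈ Finset.Icc 1 (s - n - 1),
                piPrime A (-(n:ℤ)) m ω ℓ j * B (-(n:ℤ) - m) ω j)| ^ β) μ := by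
    refine hQH.congr ?_
    filter_upwards [hQeq] with ω hω
    rw [hω]
  refine lt_of_le_of_lt (lintegral_mono fun ω => ?_) hQint.lintegral_lt_top
  exact ENNReal.ofReal_le_ofReal
    ((le_abs_self _).trans (Real.abs_rpow_le_abs_rpow _ _))

end TriSRE
end

section
/- Suppose i ∈ {1, …, d} satisfies α_i > α̃_i = α_{j_0} for some j_0 with i ◁ j_0, and let u_i = lim_{s→∞} E[π_{i j_0}(s)^{α_{j_0}}] (which exists, is finite and strictly positive). Then for every j with j_0 ▷ j ⊵ i (i.e. i ⊴ j ◁ j_0) one has lim_{s→∞} E[π_{ij}(s)^{α_{j_0}}] = 0; in particular there exists ŝ_j such that E[π_{ij}(s)^{α_{j_0}}] < u_i for all s > ŝ_j. -/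
open MeasureTheory ProbabilityTheory Filter Matrix Set
open scoped ENNReal Topology

namespace TriSRE

variable {Ω : Type*} [MeasurableSpace Ω]

variable {d : ℕ}

/-- strict Young: `y ^ θ < θ * y + (1 - θ)` for `y ≥ 0`, `y ≠ 1`, `0 < θ < 1`. -/
lemma young_strict {θ y : ℝ} (hθ0 : 0 < θ) (hθ1 : θ < 1) (hy : 0 ≤ y) (hy1 : y ≠ 1) :
    y ^ θ < θ * y + (1 - θ) := by
  rcases eq_or_lt_of_le hy with h0 | h0
  · rw [← h0, Real.zero_rpow hθ0.ne']
    nlinarith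
  · have hlog : Real.log y ≠ 0 := Real.log_ne_zero_of_pos_of_ne_one h0 hy1
    have := strictConvexOn_exp.2 (Set.mem_univ (Real.log y)) (Set.mem_univ (0 : ℝ))
      hlog hθ0 (show (0:ℝ) < 1 - θ by linarith) (show θ + (1 - θ) = 1 by ring)
    simp only [smul_eq_mul, mul_zero, add_zero, Real.exp_zero, mul_one] at this
    calc y ^ θ = Real.exp (θ * Real.log y) := by
          rw [Real.rpow_def_of_pos h0, mul_comm]
      _ < θ * Real.exp (Real.log y) + (1 - θ) := this
      _ = θ * y + (1 - θ) := by rw [Real.exp_log h0]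

lemma young_le {θ y : ℝ} (hθ0 : 0 < θ) (hθ1 : θ < 1) (hy : 0 ≤ y) :
    y ^ θ ≤ θ * y + (1 - θ) := by
  rcases eq_or_ne y 1 with rfl | hy1
  · simp
  · exact (young_strict hθ0 hθ1 hy hy1).le

lemma rpow_le_one_add_rpow_s11 {x β a : ℝ} (hx : 0 ≤ x) (hβ : 0 < β) (hβa : β ≤ a) :
    x ^ β ≤ 1 + x ^ a := by
  rcases le_or_gt x 1 with h | h
  · have h1 : x ^ β ≤ 1 := Real.rpow_le_one hx h hβ.le
    have h2 : 0 ≤ x ^ a := Real.rpow_nonneg hx a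
    linarith
  · have h1 : x ^ β ≤ x ^ a := Real.rpow_le_rpow_of_exponent_le h.le hβa
    have h2 : 0 ≤ x ^ β := Real.rpow_nonneg hx β
    linarith

/-- real-valued recursion convergence lemma -/
lemma tendsto_of_rec_real {H e : ℕ → ℝ} {r : ℝ} (hr0 : 0 ≤ r) (hr : r < 1)
    (hH : ∀ s, 0 ≤ H s) (hrec : ∀ s, H (s + 1) ≤ r * H s + e s)
    (he : Tendsto e atTop (𝓝 0)) : Tendsto H atTop (𝓝 0) := by
  rw [Metric.tendsto_atTop]
  intro δ hδ
  have h1r : 0 < 1 - r := by linarith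
  have hδ4 : 0 < (1 - r) * (δ / 2) := by positivity
  obtain ⟨s₀, hs₀⟩ := (Metric.tendsto_atTop.1 he) _ hδ4
  have key : ∀ n, H (s₀ + n) ≤ r ^ n * H s₀ + δ / 2 := by
    intro n
    induction n with
    | zero =>
      simp only [pow_zero, one_mul, Nat.add_zero]
      linarith
    | succ n ih =>
      have he' : e (s₀ + n) ≤ (1 - r) * (δ / 2) := by
        have := hs₀ (s₀ + n) (by omega)
        rw [Real.dist_eq, sub_zero] at this
        exact (le_abs_self _).trans this.le
      have h0 : H (s₀ + (n + 1)) = H ((s₀ + n) + 1) := by ring_nf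
      rw [h0, pow_succ]
      calc H ((s₀ + n) + 1) ≤ r * H (s₀ + n) + e (s₀ + n) := hrec _
        _ ≤ r * (r ^ n * H s₀ + δ / 2) + (1 - r) * (δ / 2) := by
            have := hH (s₀ + n); nlinarith
        _ = r ^ n * r * H s₀ + δ / 2 := by ring
  have hpow : Tendsto (fun n : ℕ => r ^ n * H s₀) atTop (𝓝 0) := by
    simpa using (tendsto_pow_atTop_nhds_zero_of_lt_one hr0 hr).mul_const (H s₀)
  obtain ⟨n₀, hn₀⟩ := (Metric.tendsto_atTop.1 hpow) (δ / 2) (by positivity)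
  refine ⟨s₀ + n₀, fun s hs => ?_⟩
  have hkey := key (s - s₀)
  rw [Nat.add_sub_cancel' (by omega : s₀ ≤ s)] at hkey
  have h2 : r ^ (s - s₀) * H s₀ < δ / 2 := by
    have := hn₀ (s - s₀) (by omega)
    rw [Real.dist_eq, sub_zero] at this
    exact (le_abs_self _).trans_lt this
  rw [Real.dist_eq, sub_zero, abs_of_nonneg (hH s)]
  linarith

/-- pushing a tendsto-to-zero through `rpow` with positive exponent, in `ℝ≥0∞`. -/
lemma tendsto_rpow_zero_of_pos {u : ℕ → ℝ≥0∞} (h : Tendsto u atTop (𝓝 0)) {p : ℝ}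
    (hp : 0 < p) : Tendsto (fun s => u s ^ p) atTop (𝓝 0) := by
  rw [ENNReal.tendsto_nhds_zero] at h ⊢
  intro ε hε
  rcases eq_or_ne ε ⊤ with rfl | hεt
  · exact Eventually.of_forall fun _ => le_top
  · have hδ : (0 : ℝ≥0∞) < ε ^ (1 / p) :=
      ENNReal.rpow_pos hε.bot_lt hεt
    filter_upwards [h _ hδ] with s hs
    calc u s ^ p ≤ (ε ^ (1 / p)) ^ p := ENNReal.rpow_le_rpow hs hp.le
      _ = ε := by
        rw [← ENNReal.rpow_mul, one_div, inv_mul_cancel₀ hp.ne', ENNReal.rpow_one]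

/-- `ℝ≥0∞`-valued recursion convergence lemma. -/
lemma tendsto_of_rec_ennreal {h ε : ℕ → ℝ≥0∞} {ρ : ℝ≥0∞} (hρ : ρ < 1)
    (hfin : ∀ s, h s ≠ ∞) (hεfin : ∀ s, ε s ≠ ∞)
    (hrec : ∀ s, h (s + 1) ≤ ρ * h s + ε s) (hε : Tendsto ε atTop (𝓝 0)) :
    Tendsto h atTop (𝓝 0) := by
  have hρt : ρ ≠ ∞ := hρ.trans_le le_top |>.ne
  have hr : ρ.toReal < 1 := by
    rwa [← ENNReal.toReal_one, ENNReal.toReal_lt_toReal hρt ENNReal.one_ne_top]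
  have hrec' : ∀ s, (h (s + 1)).toReal ≤ ρ.toReal * (h s).toReal + (ε s).toReal := by
    intro s
    have hfin' : ρ * h s + ε s ≠ ∞ := by
      simp [ENNReal.add_eq_top, ENNReal.mul_eq_top, hρt, hfin s, hεfin s]
    have := ENNReal.toReal_mono hfin' (hrec s)
    rwa [ENNReal.toReal_add (by simp [ENNReal.mul_eq_top, hρt, hfin s]) (hεfin s),
      ENNReal.toReal_mul] at this
  have he : Tendsto (fun s => (ε s).toReal) atTop (𝓝 0) := by
    rw [show (0:ℝ) = (0:ℝ≥0∞).toReal by simp]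
    exact (ENNReal.tendsto_toReal_iff hεfin (by simp)).2 hε
  have := tendsto_of_rec_real ENNReal.toReal_nonneg hr (fun s => ENNReal.toReal_nonneg)
    hrec' he
  rw [show (0:ℝ) = (0:ℝ≥0∞).toReal by simp] at this
  exact (ENNReal.tendsto_toReal_iff hfin (by simp)).1 this

/-- abstract matrix-product evaluator: `pfun d n x = x 0 ⋯ x (n-1)` read as matrices,
multiplied in the order `(…((1 * x 0) * x 1)…) * x (n-1)`. -/
noncomputable def pfun (d : ℕ) : ℕ → (ℕ → (Fin d → Fin d → ℝ)) → (Fin d → Fin d → ℝ)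
  | 0, _ => fun a b => if a = b then 1 else 0
  | n + 1, x => fun a b => ∑ c, pfun d n x a c * x n c b

variable {d : ℕ}

lemma pfun_eq {Ω : Type*} (A : ℤ → Ω → Matrix (Fin d) (Fin d) ℝ) (t : ℤ) (ω : Ω) :
    ∀ n a b, PiProd A t n ω a b = pfun d n (fun m => A (t - m) ω) a b := by
  intro n
  induction n with
  | zero => intro a b; simp [PiProd, pfun, Matrix.one_apply]
  | succ n ih =>
    intro a b
    show (PiProd A t n ω * A (t - n) ω) a b = _
    rw [Matrix.mul_apply]
    simp only [pfun]
    exact Finset.sum_congr rfl fun c _ => by rw [ih]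

lemma pfun_congr {x y : ℕ → (Fin d → Fin d → ℝ)} :
    ∀ n, (∀ m < n, x m = y m) → pfun d n x = pfun d n y := by
  intro n
  induction n with
  | zero => intro _; rfl
  | succ n ih =>
    intro h
    have h1 : pfun d n x = pfun d n y := ih fun m hm => h m (by omega)
    funext a b
    simp only [pfun, h1, h n (by omega)]

lemma pfun_measurable (n : ℕ) (a b : Fin d) :
    Measurable fun x : ℕ → Fin d → Fin d → ℝ => pfun d n x a b := by
  induction n generalizing a b with
  | zero => simp only [pfun]; exact measurable_const
  | succ n ih =>
    simp only [pfun]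
    exact Finset.measurable_sum _ fun c _ =>
      (ih a c).mul (((measurable_pi_apply n).comp measurable_id).eval.eval)
section Aux

variable {Ω : Type*} [MeasurableSpace Ω] {d : ℕ} {μ : Measure Ω}
  {A : ℤ → Ω → Matrix (Fin d) (Fin d) ℝ} {B : ℤ → Ω → Fin d → ℝ}

lemma measurable_pair (hiid : IIDCopies μ A B) (t : ℤ) :
    Measurable fun ω => (Matrix.of.symm (A t ω), B t ω) :=
  Measurable.prod
    (measurable_pi_lambda _ fun a => measurable_pi_lambda _ fun b => hiid.1 t a b)
    (measurable_pi_lambda _ fun a => hiid.2.1 t a)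

lemma transfer_lintegral (hiid : IIDCopies μ A B)
    {g : (Fin d → Fin d → ℝ) × (Fin d → ℝ) → ℝ≥0∞} (hg : Measurable g) (t : ℤ) :
    ∫⁻ ω, g (Matrix.of.symm (A t ω), B t ω) ∂μ
      = ∫⁻ ω, g (Matrix.of.symm (A 0 ω), B 0 ω) ∂μ := by
  rw [← lintegral_map hg (measurable_pair hiid t), hiid.2.2.2 t,
    lintegral_map hg (measurable_pair hiid 0)]

lemma transfer_ae (hiid : IIDCopies μ A B)
    {E : Set ((Fin d → Fin d → ℝ) × (Fin d → ℝ))} (hE : MeasurableSet E)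
    (h0 : ∀ᵐ ω ∂μ, (Matrix.of.symm (A 0 ω), B 0 ω) ∈ E) (t : ℤ) :
    ∀ᵐ ω ∂μ, (Matrix.of.symm (A t ω), B t ω) ∈ E := by
  rw [ae_iff] at h0 ⊢
  have h1 : μ ((fun ω => (Matrix.of.symm (A t ω), B t ω)) ⁻¹' Eᶜ) = 0 := by
    rw [← Measure.map_apply (measurable_pair hiid t) hE.compl, hiid.2.2.2 t,
      Measure.map_apply (measurable_pair hiid 0) hE.compl]
    exact h0
  exact h1

lemma ae_nonneg_A (hiid : IIDCopies μ A B) (hT : CondT μ (A 0) (B 0) α') (t : ℤ)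
    (k l : Fin d) : ∀ᵐ ω ∂μ, 0 ≤ A t ω k l := by
  have := transfer_ae hiid (E := {p | 0 ≤ p.1 k l})
    (measurableSet_le measurable_const (((measurable_pi_apply k).comp measurable_fst).eval))
    (hT.nonnegA k l) t
  exact this

end Aux
section Aux2

variable {Ω : Type*} [MeasurableSpace Ω] {d : ℕ} {μ : Measure Ω}
  {A : ℤ → Ω → Matrix (Fin d) (Fin d) ℝ} {B : ℤ → Ω → Fin d → ℝ} {α : Fin d → ℝ}

lemma ae_zero_A (hiid : IIDCopies μ A B) (hT : CondT μ (A 0) (B 0) α) {k l : Fin d}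
    (h : ¬ DirectDep μ (A 0) k l) (t : ℤ) : ∀ᵐ ω ∂μ, A t ω k l = 0 := by
  have h0 : ∀ᵐ ω ∂μ, A 0 ω k l = 0 := by
    have hm : μ {ω | 0 < A 0 ω k l} = 0 := by
      by_contra hm
      exact h (pos_iff_ne_zero.2 hm)
    filter_upwards [hT.nonnegA k l, (ae_iff.2 (by simpa using hm) :
      ∀ᵐ ω ∂μ, ¬ 0 < A 0 ω k l)] with ω h1 h2
    · exact le_antisymm (not_lt.1 h2) h1
  have := transfer_ae hiid (E := {p | p.1 k l = 0})
    (measurableSet_eq_fun (((measurable_pi_apply k).comp measurable_fst).eval)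
      measurable_const) h0 t
  exact this

lemma directDep_le (hT : CondT μ (A 0) (B 0) α) (hμ : μ ≠ 0) {k l : Fin d}
    (h : DirectDep μ (A 0) k l) : k ≤ l := by
  by_contra hlt
  push_neg at hlt
  have h0 : ∀ᵐ ω ∂μ, A 0 ω k l = 0 := hT.upperTriangular k l hlt
  have : μ {ω | 0 < A 0 ω k l} = 0 := by
    refine measure_mono_null (fun ω hω => ?_) (ae_iff.1 h0)
    simp only [Set.mem_setOf_eq] at hω ⊢
    exact hω.ne'
  rw [DirectDep, this] at h
  exact lt_irrefl 0 h

lemma dep_le (hT : CondT μ (A 0) (B 0) α) (hμ : μ ≠ 0) {k l : Fin d}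
    (h : Dep μ (A 0) k l) : k ≤ l := by
  induction h with
  | refl => exact le_rfl
  | tail _ hd ih => exact ih.trans (directDep_le hT hμ hd)

lemma measurable_piProd (hiid : IIDCopies μ A B) (t : ℤ) (n : ℕ) (a b : Fin d) :
    Measurable fun ω => PiProd A t n ω a b := by
  induction n generalizing a b with
  | zero =>
    simp only [PiProd]
    exact measurable_const
  | succ n ih =>
    have : ∀ ω, PiProd A t (n+1) ω a b = ∑ c, PiProd A t n ω a c * A (t - n) ω c b := by
      intro ω
      show (PiProd A t n ω * A (t - n) ω) a b = _
      rw [Matrix.mul_apply]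
    simp only [this]
    exact Finset.measurable_sum _ fun c _ => (ih a c).mul (hiid.1 _ c b)

lemma ae_nonneg_piProd (hiid : IIDCopies μ A B) (hT : CondT μ (A 0) (B 0) α) (t : ℤ)
    (n : ℕ) : ∀ᵐ ω ∂μ, ∀ a b, 0 ≤ PiProd A t n ω a b := by
  induction n with
  | zero =>
    refine Eventually.of_forall fun ω a b => ?_
    simp only [PiProd, Matrix.one_apply]
    positivity
  | succ n ih =>
    have hA : ∀ᵐ ω ∂μ, ∀ c b : Fin d, 0 ≤ A (t - n) ω c b := by
      rw [ae_all_iff]; intro c; rw [ae_all_iff]; intro b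
      exact ae_nonneg_A hiid hT _ c b
    filter_upwards [ih, hA] with ω h1 h2 a b
    show 0 ≤ (PiProd A t n ω * A (t - n) ω) a b
    rw [Matrix.mul_apply]
    exact Finset.sum_nonneg fun c _ => mul_nonneg (h1 a c) (h2 c b)

lemma ae_zero_piProd (hiid : IIDCopies μ A B) (hT : CondT μ (A 0) (B 0) α) (i : Fin d)
    (t : ℤ) (n : ℕ) :
    ∀ᵐ ω ∂μ, ∀ b, ¬ Dep μ (A 0) i b → PiProd A t n ω i b = 0 := by
  induction n with
  | zero =>
    refine Eventually.of_forall fun ω b hb => ?_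
    simp only [PiProd, Matrix.one_apply]
    rw [if_neg]
    rintro rfl
    exact hb Relation.ReflTransGen.refl
  | succ n ih =>
    have hA : ∀ᵐ ω ∂μ, ∀ c b : Fin d, ¬ DirectDep μ (A 0) c b → A (t - n) ω c b = 0 := by
      rw [ae_all_iff]; intro c; rw [ae_all_iff]; intro b
      by_cases h : DirectDep μ (A 0) c b
      · exact Eventually.of_forall fun ω hh => absurd h hh
      · filter_upwards [ae_zero_A hiid hT h (t - n)] with ω h0 _
        exact h0
    filter_upwards [ih, hA] with ω h1 h2 b hb
    show (PiProd A t n ω * A (t - n) ω) i b = 0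
    rw [Matrix.mul_apply]
    refine Finset.sum_eq_zero fun c _ => ?_
    by_cases hc : Dep μ (A 0) i c
    · have hcb : ¬ DirectDep μ (A 0) c b := fun hd => hb (hc.tail hd)
      rw [h2 c b hcb, mul_zero]
    · rw [h1 c hc, zero_mul]

end Aux2
section Aux3

variable {Ω : Type*} [MeasurableSpace Ω] {d : ℕ} {μ : Measure Ω} [IsProbabilityMeasure μ]
  {A : ℤ → Ω → Matrix (Fin d) (Fin d) ℝ} {B : ℤ → Ω → Fin d → ℝ} {α : Fin d → ℝ} {β : ℝ}

lemma lint_rpow_lt_top (hiid : IIDCopies μ A B) (hT : CondT μ (A 0) (B 0) α)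
    (hβ : 0 < β) {k : Fin d} (l : Fin d) (hβa : β ≤ α k) :
    ∫⁻ ω, ENNReal.ofReal (A 0 ω k l ^ β) ∂μ < ∞ := by
  have hb : ∀ᵐ ω ∂μ, ENNReal.ofReal (A 0 ω k l ^ β)
      ≤ 1 + ENNReal.ofReal (A 0 ω k l ^ α k) := by
    filter_upwards [hT.nonnegA k l] with ω h0
    calc ENNReal.ofReal (A 0 ω k l ^ β) ≤ ENNReal.ofReal (1 + A 0 ω k l ^ α k) :=
        ENNReal.ofReal_le_ofReal (rpow_le_one_add_rpow_s11 h0 hβ hβa)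
      _ ≤ ENNReal.ofReal 1 + ENNReal.ofReal (A 0 ω k l ^ α k) := ENNReal.ofReal_add_le
      _ = 1 + ENNReal.ofReal (A 0 ω k l ^ α k) := by rw [ENNReal.ofReal_one]
  calc ∫⁻ ω, ENNReal.ofReal (A 0 ω k l ^ β) ∂μ
      ≤ ∫⁻ ω, (1 + ENNReal.ofReal (A 0 ω k l ^ α k)) ∂μ := lintegral_mono_ae hb
    _ = 1 * μ Set.univ + ∫⁻ ω, ENNReal.ofReal (A 0 ω k l ^ α k) ∂μ := by
        rw [lintegral_add_left measurable_const, lintegral_const]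
    _ < ∞ := by
        have h1 : ∫⁻ ω, ENNReal.ofReal (A 0 ω k l ^ α k) ∂μ < ∞ := by
          refine lt_of_le_of_lt (lintegral_mono fun ω => ?_) (hT.A_moment k l).2
          exact Real.ofReal_le_enorm _
        simp only [one_mul, measure_univ]
        exact ENNReal.add_lt_top.2 ⟨ENNReal.one_lt_top, h1⟩

lemma lint_rpow_shift (hiid : IIDCopies μ A B) (hβ : 0 ≤ β) (t : ℤ) (k l : Fin d) :
    ∫⁻ ω, ENNReal.ofReal (A t ω k l ^ β) ∂μ
      = ∫⁻ ω, ENNReal.ofReal (A 0 ω k l ^ β) ∂μ := by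
  have := transfer_lintegral hiid
    (g := fun p => ENNReal.ofReal (p.1 k l ^ β))
    (ENNReal.measurable_ofReal.comp ((Real.continuous_rpow_const hβ).measurable.comp
      (((measurable_pi_apply k).comp measurable_fst).eval))) t
  exact this

/-- strict moment bound on the diagonal: `E[A_kk^β] < 1` when `0 < β < α k`. -/
lemma diag_moment_lt_one (hT : CondT μ (A 0) (B 0) α) {k : Fin d} (hβ0 : 0 < β)
    (hβk : β < α k) : ∫⁻ ω, ENNReal.ofReal (A 0 ω k k ^ β) ∂μ < 1 := by
  set θ : ℝ := β / α k with hθdef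
  have hαk : 0 < α k := hT.alpha_pos k
  have hθ0 : 0 < θ := div_pos hβ0 hαk
  have hθ1 : θ < 1 := (div_lt_one hαk).2 hβk
  set X : Ω → ℝ := fun ω => A 0 ω k k with hX
  have hXm : Measurable X := hT.measA k k
  have hmβ : Measurable fun ω => X ω ^ β :=
    (Real.continuous_rpow_const hβ0.le).measurable.comp hXm
  have hmα : Measurable fun ω => X ω ^ α k :=
    (Real.continuous_rpow_const hαk.le).measurable.comp hXm
  have hIα : Integrable (fun ω => X ω ^ α k) μ := hT.A_moment k k
  have hIβ : Integrable (fun ω => X ω ^ β) μ := by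
    refine Integrable.mono' ((integrable_const (1:ℝ)).add hIα) hmβ.aestronglyMeasurable ?_
    filter_upwards [hT.nonnegA k k] with ω h0
    rw [Real.norm_of_nonneg (Real.rpow_nonneg h0 β)]
    exact rpow_le_one_add_rpow_s11 h0 hβ0 hβk.le
  set g : Ω → ℝ := fun ω => θ * X ω ^ α k + (1 - θ) - X ω ^ β with hg
  have hgm : Measurable g := ((hmα.const_mul θ).add_const _).sub hmβ
  have hgnn : ∀ᵐ ω ∂μ, 0 ≤ g ω := by
    filter_upwards [hT.nonnegA k k] with ω h0
    have hy : (0:ℝ) ≤ X ω ^ α k := Real.rpow_nonneg h0 _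
    have h1 : X ω ^ β = (X ω ^ α k) ^ θ := by
      rw [← Real.rpow_mul h0, mul_div_cancel₀ β hαk.ne']
    have := young_le hθ0 hθ1 hy
    rw [hg]; dsimp only; rw [h1]; linarith
  have hI1 : Integrable (fun ω => θ * X ω ^ α k + (1 - θ)) μ :=
    (hIα.const_mul θ).add (integrable_const _)
  have hint : ∫ ω, g ω ∂μ = 1 - ∫ ω, X ω ^ β ∂μ := by
    have e1 : ∫ ω, g ω ∂μ
        = ∫ ω, (θ * X ω ^ α k + (1 - θ)) ∂μ - ∫ ω, X ω ^ β ∂μ := integral_sub hI1 hIβ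
    have e2 : ∫ ω, (θ * X ω ^ α k + (1 - θ)) ∂μ
        = ∫ ω, θ * X ω ^ α k ∂μ + ∫ ω, (1 - θ) ∂μ :=
      integral_add (hIα.const_mul θ) (integrable_const _)
    have e3 : ∫ ω, θ * X ω ^ α k ∂μ = θ := by
      rw [MeasureTheory.integral_const_mul]
      have : ∫ ω, X ω ^ α k ∂μ = 1 := hT.diag_moment_one k
      rw [this, mul_one]
    have e4 : ∫ ω, (1 - θ) ∂μ = 1 - θ := by
      rw [integral_const]; simp
    rw [e1, e2, e3, e4]; ring
  have hpos : 0 < ∫ ω, g ω ∂μ := by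
    have hlr : ENNReal.ofReal (∫ ω, g ω ∂μ) = ∫⁻ ω, ENNReal.ofReal (g ω) ∂μ :=
      ofReal_integral_eq_lintegral_ofReal (hI1.sub hIβ) hgnn
    have hlpos : 0 < ∫⁻ ω, ENNReal.ofReal (g ω) ∂μ := by
      rw [lintegral_pos_iff_support hgm.ennreal_ofReal]
      have hsub : {ω | 0 < A 0 ω k k ∧ ∀ n : ℤ, Real.log (A 0 ω k k) ≠ (0:ℝ) * n}
          ⊆ Function.support fun ω => ENNReal.ofReal (g ω) := by
        rintro ω ⟨h0, hlog⟩
        have hne1 : X ω ≠ 1 := by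
          intro h1
          apply hlog 1
          have h2 : A 0 ω k k = 1 := h1
          rw [h2, Real.log_one]
          simp
        have hyne : X ω ^ α k ≠ 1 := by
          rcases lt_or_gt_of_ne hne1 with h | h
          · have h2 : X ω ^ α k < 1 ^ α k := Real.rpow_lt_rpow h0.le h hαk
            rw [Real.one_rpow] at h2
            exact ne_of_lt h2
          · have h2 : (1:ℝ) ^ α k < X ω ^ α k := Real.rpow_lt_rpow (by norm_num) h hαk
            rw [Real.one_rpow] at h2
            exact ne_of_gt h2
        have h1 : X ω ^ β = (X ω ^ α k) ^ θ := by
          rw [← Real.rpow_mul h0.le, mul_div_cancel₀ β hαk.ne']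
        have hgt : 0 < g ω := by
          have := young_strict hθ0 hθ1 (Real.rpow_nonneg h0.le (α k)) hyne
          rw [hg]; dsimp only; rw [h1]; linarith
        simp only [Function.mem_support, ne_eq, ENNReal.ofReal_eq_zero, not_le]
        exact hgt
      calc 0 < μ {ω | 0 < A 0 ω k k ∧ ∀ n : ℤ, Real.log (A 0 ω k k) ≠ (0:ℝ) * n} :=
          pos_iff_ne_zero.2 (hT.nonarithmetic k 0)
        _ ≤ _ := measure_mono hsub
    rw [← hlr] at hlpos
    exact ENNReal.ofReal_pos.1 hlpos
  have hlt : ∫ ω, X ω ^ β ∂μ < 1 := by linarith [hint ▸ hpos]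
  have : ∫⁻ ω, ENNReal.ofReal (X ω ^ β) ∂μ = ENNReal.ofReal (∫ ω, X ω ^ β ∂μ) := by
    rw [ofReal_integral_eq_lintegral_ofReal hIβ]
    filter_upwards [hT.nonnegA k k] with ω h0
    exact Real.rpow_nonneg h0 β
  rw [this]
  exact lt_of_lt_of_le (ENNReal.ofReal_lt_one.2 hlt) le_rfl

end Aux3
section Indep

variable {Ω : Type*} [MeasurableSpace Ω] {d : ℕ} {μ : Measure Ω}
  {A : ℤ → Ω → Matrix (Fin d) (Fin d) ℝ} {B : ℤ → Ω → Fin d → ℝ}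

/-- `Π_s` (built from `A_0, …, A_{-(s-1)}`) is independent of `A_{-s}`. -/
lemma indep_piProd_A (hiid : IIDCopies μ A B) (s : ℕ) (i k k' l : Fin d) :
    IndepFun (fun ω => PiProd A 0 s ω i k) (fun ω => A ((0:ℤ) - s) ω k' l) μ := by
  classical
  set S : Finset ℤ := (Finset.range s).image (fun n : ℕ => (0:ℤ) - n) with hS
  set T : Finset ℤ := {(0:ℤ) - s} with hT
  have hST : Disjoint S T := by
    rw [Finset.disjoint_left]
    intro x hx hxT
    rw [hS, Finset.mem_image] at hx
    obtain ⟨n, hn, rfl⟩ := hx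
    rw [hT, Finset.mem_singleton] at hxT
    have : (n : ℤ) = s := by omega
    rw [Finset.mem_range] at hn
    omega
  have hbase := hiid.2.2.1.indepFun_finset S T hST (measurable_pair hiid)
  set φ : ((t : S) → (Fin d → Fin d → ℝ) × (Fin d → ℝ)) → ℝ := fun v =>
    pfun d s (fun m => if h : ((0:ℤ) - m) ∈ S then (v ⟨_, h⟩).1 else fun _ _ => 0) i k
    with hφ
  set ψ : ((t : T) → (Fin d → Fin d → ℝ) × (Fin d → ℝ)) → ℝ := fun v =>
    (v ⟨(0:ℤ) - s, Finset.mem_singleton_self _⟩).1 k' l with hψ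
  have hφm : Measurable φ := by
    apply (pfun_measurable s i k).comp
    apply measurable_pi_lambda
    intro m
    by_cases h : ((0:ℤ) - m) ∈ S
    · simp only [dif_pos h]
      exact measurable_fst.comp (measurable_pi_apply _)
    · simp only [dif_neg h]
      exact measurable_const
  have hψm : Measurable ψ :=
    (((measurable_pi_apply k').comp (measurable_fst.comp (measurable_pi_apply _))).eval)
  have := hbase.comp hφm hψm
  have heq1 : (φ ∘ fun ω (t : S) => (Matrix.of.symm (A t ω), B t ω))
      = fun ω => PiProd A 0 s ω i k := by
    funext ω
    show pfun d s _ i k = _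
    have hc : pfun d s (fun m =>
        if h : ((0:ℤ) - m) ∈ S then (Matrix.of.symm (A ((0:ℤ) - m) ω), B ((0:ℤ) - m) ω).1
        else fun _ _ => 0) = pfun d s (fun m => A ((0:ℤ) - m) ω) := by
      apply pfun_congr
      intro m hm
      have hmem : ((0:ℤ) - m) ∈ S := by
        rw [hS, Finset.mem_image]
        exact ⟨m, Finset.mem_range.2 hm, rfl⟩
      simp only [dif_pos hmem]
      rfl
    exact (congrFun (congrFun hc i) k).trans (pfun_eq A 0 ω s i k).symm
  have heq2 : (ψ ∘ fun ω (t : T) => (Matrix.of.symm (A t ω), B t ω))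
      = fun ω => A ((0:ℤ) - s) ω k' l := by
    funext ω; rfl
  rwa [heq1, heq2] at this

end Indep
section KeyStep

variable {Ω : Type*} [MeasurableSpace Ω] {d : ℕ} {μ : Measure Ω} [IsProbabilityMeasure μ]
  {A : ℤ → Ω → Matrix (Fin d) (Fin d) ℝ} {B : ℤ → Ω → Fin d → ℝ} {α : Fin d → ℝ} {β : ℝ}

lemma ennreal_sum_rpow_le {ι : Type*} (K : Finset ι) (F : ι → ℝ≥0∞) (hβ0 : 0 < β)
    (hβ1 : β ≤ 1) : (∑ k ∈ K, F k) ^ β ≤ ∑ k ∈ K, F k ^ β := by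
  classical
  induction K using Finset.induction with
  | empty => simp [ENNReal.zero_rpow_of_pos hβ0]
  | insert _ _ hnotmem ih =>
    rw [Finset.sum_insert hnotmem, Finset.sum_insert hnotmem]
    calc (F _ + ∑ k ∈ _, F k) ^ β ≤ F _ ^ β + (∑ k ∈ _, F k) ^ β :=
        ENNReal.rpow_add_le_add_rpow _ _ hβ0.le hβ1
      _ ≤ _ := add_le_add_right ih _

lemma lint_Lp_sum_le {ι : Type*} (K : Finset ι) (F : ι → Ω → ℝ≥0∞)
    (hmeas : ∀ k, Measurable (F k)) (hβ : 1 ≤ β) :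
    (∫⁻ ω, (∑ k ∈ K, F k ω) ^ β ∂μ) ^ (1/β) ≤ ∑ k ∈ K, (∫⁻ ω, F k ω ^ β ∂μ) ^ (1/β) := by
  classical
  have hβ0 : 0 < β := lt_of_lt_of_le zero_lt_one hβ
  induction K using Finset.induction with
  | empty =>
    have h1 : ∀ ω : Ω, (∑ k ∈ (∅ : Finset ι), F k ω) ^ β = 0 := by
      intro ω
      rw [Finset.sum_empty, ENNReal.zero_rpow_of_pos hβ0]
    rw [lintegral_congr h1, lintegral_zero, ENNReal.zero_rpow_of_pos (one_div_pos.mpr hβ0),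
      Finset.sum_empty]
  | insert _ _ hnotmem ih =>
    rename_i a K'
    rw [Finset.sum_insert hnotmem]
    have h1 : ∀ ω, (∑ k ∈ insert a K', F k ω) ^ β
        = ((F a + fun ω => ∑ k ∈ K', F k ω) ω) ^ β := by
      intro ω
      rw [Finset.sum_insert hnotmem]; rfl
    calc (∫⁻ ω, (∑ k ∈ insert a K', F k ω) ^ β ∂μ) ^ (1/β)
        = (∫⁻ ω, ((F a + fun ω' => ∑ k ∈ K', F k ω') ω) ^ β ∂μ) ^ (1/β) := by
          rw [lintegral_congr fun ω => h1 ω]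
      _ ≤ (∫⁻ ω, F a ω ^ β ∂μ) ^ (1/β)
            + (∫⁻ ω, (∑ k ∈ K', F k ω) ^ β ∂μ) ^ (1/β) :=
          ENNReal.lintegral_Lp_add_le (hmeas a).aemeasurable
            (Finset.measurable_sum K' fun k _ => hmeas k).aemeasurable hβ
      _ ≤ _ := add_le_add_right ih _

/-- one-step recursion bound, with exponent `η = 1` if `β ≤ 1` and `η = 1/β` otherwise. -/
lemma key_step (hiid : IIDCopies μ A B) (hT : CondT μ (A 0) (B 0) α) (hβ0 : 0 < β)
    (i j : Fin d) (s : ℕ) :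
    (∫⁻ ω, ENNReal.ofReal (PiProd A 0 (s+1) ω i j ^ β) ∂μ)
        ^ (if β ≤ 1 then (1:ℝ) else 1/β)
      ≤ ∑ k, (∫⁻ ω, ENNReal.ofReal (A 0 ω k j ^ β) ∂μ) ^ (if β ≤ 1 then (1:ℝ) else 1/β)
          * (∫⁻ ω, ENNReal.ofReal (PiProd A 0 s ω i k ^ β) ∂μ)
            ^ (if β ≤ 1 then (1:ℝ) else 1/β) := by
  classical
  set G : Fin d → Ω → ℝ≥0∞ := fun k ω =>
    ENNReal.ofReal (PiProd A 0 s ω i k) * ENNReal.ofReal (A ((0:ℤ) - s) ω k j) with hG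
  have hGmeas : ∀ k, Measurable (G k) :=
    fun k => ((measurable_piProd hiid 0 s i k).ennreal_ofReal).mul
      ((hiid.1 _ k j).ennreal_ofReal)
  -- Step 0 : rewrite the lintegral at time s+1
  have step0 : ∫⁻ ω, ENNReal.ofReal (PiProd A 0 (s+1) ω i j ^ β) ∂μ
      = ∫⁻ ω, (∑ k, G k ω) ^ β ∂μ := by
    refine lintegral_congr_ae ?_
    have hA : ∀ᵐ ω ∂μ, ∀ c : Fin d, 0 ≤ A ((0:ℤ) - s) ω c j := by
      rw [ae_all_iff]; intro c; exact ae_nonneg_A hiid hT _ c j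
    filter_upwards [ae_nonneg_piProd hiid hT 0 s, hA] with ω h1 h2
    have hmul : PiProd A 0 (s+1) ω i j = ∑ c, PiProd A 0 s ω i c * A ((0:ℤ) - s) ω c j := by
      show (PiProd A 0 s ω * A (0 - s) ω) i j = _
      rw [Matrix.mul_apply]
    rw [hmul]
    have hnn : 0 ≤ ∑ c, PiProd A 0 s ω i c * A ((0:ℤ) - s) ω c j :=
      Finset.sum_nonneg fun c _ => mul_nonneg (h1 i c) (h2 c)
    rw [← ENNReal.ofReal_rpow_of_nonneg hnn hβ0.le]
    congr 1
    rw [ENNReal.ofReal_sum_of_nonneg fun c _ => mul_nonneg (h1 i c) (h2 c)]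
    exact Finset.sum_congr rfl fun c _ => ENNReal.ofReal_mul (h1 i c)
  -- independence factorization for each k
  have hfact : ∀ k, ∫⁻ ω, G k ω ^ β ∂μ
      = (∫⁻ ω, ENNReal.ofReal (A 0 ω k j ^ β) ∂μ)
        * ∫⁻ ω, ENNReal.ofReal (PiProd A 0 s ω i k ^ β) ∂μ := by
    intro k
    have he : Measurable fun x : ℝ => ENNReal.ofReal (x ^ β) :=
      (Real.continuous_rpow_const hβ0.le).measurable.ennreal_ofReal
    have hindep := ((indep_piProd_A hiid s i k k j).comp he he)
    have heq : ∀ᵐ ω ∂μ, G k ω ^ β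
        = ENNReal.ofReal (PiProd A 0 s ω i k ^ β)
          * ENNReal.ofReal (A ((0:ℤ) - s) ω k j ^ β) := by
      filter_upwards [ae_nonneg_piProd hiid hT 0 s, ae_nonneg_A hiid hT ((0:ℤ) - s) k j]
        with ω h1 h2
      rw [hG]
      dsimp only
      rw [ENNReal.mul_rpow_of_nonneg _ _ hβ0.le,
        ENNReal.ofReal_rpow_of_nonneg (h1 i k) hβ0.le,
        ENNReal.ofReal_rpow_of_nonneg h2 hβ0.le]
    have hm1 : Measurable fun ω => ENNReal.ofReal (PiProd A 0 s ω i k ^ β) :=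
      ((Real.continuous_rpow_const hβ0.le).measurable.comp
        (measurable_piProd hiid 0 s i k)).ennreal_ofReal
    have hm2 : Measurable fun ω => ENNReal.ofReal (A ((0:ℤ) - s) ω k j ^ β) :=
      ((Real.continuous_rpow_const hβ0.le).measurable.comp (hiid.1 _ k j)).ennreal_ofReal
    have hprod := lintegral_mul_eq_lintegral_mul_lintegral_of_indepFun''
      (μ := μ) (f := fun ω => ENNReal.ofReal (PiProd A 0 s ω i k ^ β))
      (g := fun ω => ENNReal.ofReal (A ((0:ℤ) - s) ω k j ^ β))
      hm1.aemeasurable hm2.aemeasurable hindep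
    rw [lintegral_congr_ae heq, hprod, lint_rpow_shift hiid hβ0.le ((0:ℤ) - s) k j,
      mul_comm]
  -- now split on β ≤ 1
  by_cases hβ1 : β ≤ 1
  · simp only [if_pos hβ1, ENNReal.rpow_one]
    calc ∫⁻ ω, ENNReal.ofReal (PiProd A 0 (s+1) ω i j ^ β) ∂μ
        = ∫⁻ ω, (∑ k, G k ω) ^ β ∂μ := step0
      _ ≤ ∫⁻ ω, ∑ k, G k ω ^ β ∂μ :=
          lintegral_mono fun ω => ennreal_sum_rpow_le Finset.univ (fun k => G k ω) hβ0 hβ1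
      _ = ∑ k, ∫⁻ ω, G k ω ^ β ∂μ :=
          lintegral_finset_sum _ fun k _ => (hGmeas k).pow_const _ |>.mono le_rfl le_rfl
      _ = ∑ k, (∫⁻ ω, ENNReal.ofReal (A 0 ω k j ^ β) ∂μ)
            * ∫⁻ ω, ENNReal.ofReal (PiProd A 0 s ω i k ^ β) ∂μ :=
          Finset.sum_congr rfl fun k _ => hfact k
  · have hβ1' : 1 ≤ β := le_of_not_ge hβ1
    simp only [if_neg hβ1]
    calc (∫⁻ ω, ENNReal.ofReal (PiProd A 0 (s+1) ω i j ^ β) ∂μ) ^ (1/β)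
        = (∫⁻ ω, (∑ k, G k ω) ^ β ∂μ) ^ (1/β) := by rw [step0]
      _ ≤ ∑ k, (∫⁻ ω, G k ω ^ β ∂μ) ^ (1/β) :=
          lint_Lp_sum_le Finset.univ G hGmeas hβ1'
      _ = ∑ k, (∫⁻ ω, ENNReal.ofReal (A 0 ω k j ^ β) ∂μ) ^ (1/β)
            * (∫⁻ ω, ENNReal.ofReal (PiProd A 0 s ω i k ^ β) ∂μ) ^ (1/β) := by
          refine Finset.sum_congr rfl fun k _ => ?_
          rw [hfact k, ENNReal.mul_rpow_of_nonneg _ _ (one_div_pos.mpr hβ0).le]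

end KeyStep
/-- Lemma 5.6 of the paper: for every intermediate coordinate `j` with
`i ⊴ j ◁ j₀`, the moments `E[π_{ij}(s)^{α j₀}]` tend to `0`; in particular they are
eventually smaller than `u_i`. -/
theorem intermediate_pi_moment_vanishes
    (μ : Measure Ω) [IsProbabilityMeasure μ] (hd : 1 ≤ d)
    (A : ℤ → Ω → Matrix (Fin d) (Fin d) ℝ) (B : ℤ → Ω → Fin d → ℝ) (α : Fin d → ℝ)
    (hiid : IIDCopies μ A B) (hT : CondT μ (A 0) (B 0) α)
    (i j₀ : Fin d) (hdep : Dep μ (A 0) i j₀) (hne : i ≠ j₀)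
    (hlt : tildeAlpha μ (A 0) α i < α i)
    (heq : tildeAlpha μ (A 0) α i = α j₀)
    (u : ℝ≥0∞) (hu_pos : 0 < u) (hu_fin : u < ⊤)
    (hu : Tendsto (fun s : ℕ => ∫⁻ ω, ENNReal.ofReal (PiProd A 0 s ω i j₀ ^ α j₀) ∂μ)
      atTop (𝓝 u)) :
    ∀ j : Fin d, Dep μ (A 0) i j → Dep μ (A 0) j j₀ → j ≠ j₀ →
      Tendsto (fun s : ℕ => ∫⁻ ω, ENNReal.ofReal (PiProd A 0 s ω i j ^ α j₀) ∂μ)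
        atTop (𝓝 0) ∧
      ∃ s₁ : ℕ, ∀ s > s₁,
        ∫⁻ ω, ENNReal.ofReal (PiProd A 0 s ω i j ^ α j₀) ∂μ < u := by
  classical
  intro j hij hjj₀ hjne
  set β : ℝ := α j₀ with hβdef
  have hβ0 : 0 < β := hT.alpha_pos j₀
  have hμ : μ ≠ 0 := IsProbabilityMeasure.ne_zero μ
  -- modified tail index facts
  have hβle : ∀ k, Dep μ (A 0) i k → β ≤ α k := by
    intro k hk
    rw [← heq, tildeAlpha]
    refine csInf_le ?_ ⟨k, hk, rfl⟩
    exact ((Set.finite_range α).subset (by rintro a ⟨l, _, rfl⟩; exact ⟨l, rfl⟩)).bddBelow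
  have hβlt : ∀ k, Dep μ (A 0) i k → k ≠ j₀ → β < α k := fun k hk hkne =>
    lt_of_le_of_ne (hβle k hk) fun h => hT.alpha_injective j₀ k (fun e => hkne e.symm) h
  -- the exponent η
  set η : ℝ := if β ≤ 1 then (1:ℝ) else 1/β with hηdef
  have hη0 : 0 < η := by
    rw [hηdef]; split
    · norm_num
    · exact one_div_pos.mpr hβ0
  -- the sequences
  set f : Fin d → ℕ → ℝ≥0∞ :=
    fun k s => ∫⁻ ω, ENNReal.ofReal (PiProd A 0 s ω i k ^ β) ∂μ with hfdef
  set F : Fin d → ℕ → ℝ≥0∞ := fun k s => f k s ^ η with hFdef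
  set c : Fin d → Fin d → ℝ≥0∞ :=
    fun k l => (∫⁻ ω, ENNReal.ofReal (A 0 ω k l ^ β) ∂μ) ^ η with hcdef
  -- basic facts about f, F, c
  have hfzero : ∀ k, ¬ Dep μ (A 0) i k → ∀ s, f k s = 0 := by
    intro k hk s
    show (∫⁻ ω, ENNReal.ofReal (PiProd A 0 s ω i k ^ β) ∂μ) = 0
    have : ∀ᵐ ω ∂μ, ENNReal.ofReal (PiProd A 0 s ω i k ^ β) = 0 := by
      filter_upwards [ae_zero_piProd hiid hT i 0 s] with ω h
      rw [h k hk, Real.zero_rpow hβ0.ne', ENNReal.ofReal_zero]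
    rw [lintegral_congr_ae this, lintegral_zero]
  have hFzero : ∀ k, ¬ Dep μ (A 0) i k → ∀ s, F k s = 0 := by
    intro k hk s
    show f k s ^ η = 0
    rw [hfzero k hk s]
    exact ENNReal.zero_rpow_of_pos hη0
  have hcfin : ∀ k l, Dep μ (A 0) i k → c k l ≠ ∞ := by
    intro k l hk
    show (∫⁻ ω, ENNReal.ofReal (A 0 ω k l ^ β) ∂μ) ^ η ≠ ∞
    exact (ENNReal.rpow_lt_top_of_nonneg hη0.le
      (lint_rpow_lt_top hiid hT hβ0 l (hβle k hk)).ne).ne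
  have hc0 : ∀ k l, ¬ DirectDep μ (A 0) k l → c k l = 0 := by
    intro k l hk
    show (∫⁻ ω, ENNReal.ofReal (A 0 ω k l ^ β) ∂μ) ^ η = 0
    have : ∀ᵐ ω ∂μ, ENNReal.ofReal (A 0 ω k l ^ β) = 0 := by
      filter_upwards [ae_zero_A hiid hT hk 0] with ω h
      rw [h, Real.zero_rpow hβ0.ne', ENNReal.ofReal_zero]
    rw [lintegral_congr_ae this, lintegral_zero]
    exact ENNReal.zero_rpow_of_pos hη0
  -- one-step recursion bound
  have hstep : ∀ (k : Fin d) (s : ℕ), F k (s+1) ≤ ∑ l, c l k * F l s := by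
    intro k s
    exact key_step hiid hT hβ0 i k s
  -- finiteness
  have hFfin : ∀ (s : ℕ) (k : Fin d), F k s ≠ ∞ := by
    intro s
    induction s with
    | zero =>
      intro k
      have hb : f k 0 ≤ 1 := by
        show (∫⁻ ω, ENNReal.ofReal (PiProd A 0 0 ω i k ^ β) ∂μ) ≤ 1
        calc ∫⁻ ω, ENNReal.ofReal (PiProd A 0 0 ω i k ^ β) ∂μ
            ≤ ∫⁻ _, 1 ∂μ := by
              refine lintegral_mono fun ω => ?_
              show ENNReal.ofReal ((1 : Matrix (Fin d) (Fin d) ℝ) i k ^ β) ≤ 1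
              rw [Matrix.one_apply]
              split
              · rw [Real.one_rpow]; simp
              · rw [Real.zero_rpow hβ0.ne']; simp
          _ = 1 := by simp
      exact (ENNReal.rpow_lt_top_of_nonneg hη0.le
        (lt_of_le_of_lt hb ENNReal.one_lt_top).ne).ne
    | succ s ih =>
      intro k
      refine ne_top_of_le_ne_top ?_ (hstep k s)
      rw [← lt_top_iff_ne_top]
      refine ENNReal.sum_lt_top.2 fun l _ => ?_
      by_cases hl : Dep μ (A 0) i l
      · exact ENNReal.mul_lt_top (hcfin l k hl).lt_top (ih l).lt_top
      · rw [hFzero l hl s, mul_zero]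
        exact ENNReal.zero_lt_top
  -- main induction
  have MAIN : ∀ n : ℕ, ∀ j' : Fin d, (j' : ℕ) < n → Dep μ (A 0) i j' →
      Dep μ (A 0) j' j₀ → j' ≠ j₀ → Tendsto (F j') atTop (𝓝 0) := by
    intro n
    induction n with
    | zero => exact fun j' hj' _ _ _ => absurd hj' (Nat.not_lt_zero _)
    | succ n ih =>
      intro j' hj' hd1 hd2 hne'
      set ε : ℕ → ℝ≥0∞ := fun s => ∑ l ∈ Finset.univ.erase j', c l j' * F l s with hεdef
      have hrec : ∀ s, F j' (s+1) ≤ c j' j' * F j' s + ε s := by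
        intro s
        refine (hstep j' s).trans (le_of_eq ?_)
        rw [hεdef, add_comm]
        exact (Finset.sum_erase_add _ _ (Finset.mem_univ j')).symm
      have hρ : c j' j' < 1 := by
        show (∫⁻ ω, ENNReal.ofReal (A 0 ω j' j' ^ β) ∂μ) ^ η < 1
        exact ENNReal.rpow_lt_one
          (diag_moment_lt_one hT hβ0 (hβlt j' hd1 hne')) hη0
      have hterm : ∀ l ∈ Finset.univ.erase j',
          Tendsto (fun s => c l j' * F l s) atTop (𝓝 0) := by
        intro l hl
        rw [Finset.mem_erase] at hl
        by_cases hdl : Dep μ (A 0) i l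
        · by_cases hdd : DirectDep μ (A 0) l j'
          · have hlle : l ≤ j' := directDep_le hT hμ hdd
            have hllt : l < j' := lt_of_le_of_ne hlle hl.1
            have hlj₀ : Dep μ (A 0) l j₀ :=
              (Relation.ReflTransGen.single hdd).trans hd2
            have hj'j₀ : j' ≤ j₀ := dep_le hT hμ hd2
            have hlnej₀ : l ≠ j₀ := ne_of_lt (lt_of_lt_of_le hllt hj'j₀)
            have hIH : Tendsto (F l) atTop (𝓝 0) :=
              ih l (by omega) hdl hlj₀ hlnej₀
            have := ENNReal.Tendsto.const_mul hIH (Or.inr (hcfin l j' hdl))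
            simpa using this
          · simp only [hc0 l j' hdd, zero_mul]
            exact tendsto_const_nhds
        · simp only [hFzero l hdl, mul_zero]
          exact tendsto_const_nhds
      have hεt : Tendsto ε atTop (𝓝 0) := by
        rw [hεdef]
        have := tendsto_finset_sum (Finset.univ.erase j') hterm
        simpa using this
      have hεfin : ∀ s, ε s ≠ ∞ := by
        intro s
        rw [hεdef, ← lt_top_iff_ne_top]
        refine ENNReal.sum_lt_top.2 fun l _ => ?_
        by_cases hdl : Dep μ (A 0) i l
        · exact ENNReal.mul_lt_top (hcfin l j' hdl).lt_top (hFfin s l).lt_top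
        · rw [hFzero l hdl s, mul_zero]; exact ENNReal.zero_lt_top
      exact tendsto_of_rec_ennreal hρ (fun s => hFfin s j') hεfin hrec hεt
  have hFj : Tendsto (F j) atTop (𝓝 0) := MAIN d j j.isLt hij hjj₀ hjne
  have hfj : Tendsto (f j) atTop (𝓝 0) := by
    have h1 : ∀ s, f j s = F j s ^ (1/η) := by
      intro s
      show f j s = (f j s ^ η) ^ (1/η)
      rw [← ENNReal.rpow_mul, mul_one_div, div_self hη0.ne', ENNReal.rpow_one]
    have := tendsto_rpow_zero_of_pos hFj (one_div_pos.mpr hη0)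
    exact (funext h1 : f j = fun s => F j s ^ (1/η)) ▸ this
  refine ⟨hfj, ?_⟩
  have hev : ∀ᶠ s in atTop, f j s < u := hfj.eventually_lt_const hu_pos
  rw [eventually_atTop] at hev
  obtain ⟨N, hN⟩ := hev
  exact ⟨N, fun s hs => hN s hs.le⟩

end TriSRE
end

section
/- Let X and Y be independent random variables with X ≥ 0 a.s., and let α > 0. Assume that limsup_{x→∞} x^α P(Y > x) < M for some constant M > 0, and that E[X^{α+ε}] < ∞ for some ε > 0. Then limsup_{x→∞} x^α P(X·Y > x) ≤ M · E[X^α]. -/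
open MeasureTheory ProbabilityTheory Filter
open scoped ENNReal Topology

/-- Lemma B.1 of the paper: a one-sided version of Breiman's lemma.
If `X ≥ 0` and `Y` are independent, `limsup_{x→∞} x^α P(Y > x) < M` and
`E[X^(α+ε)] < ∞` for some `ε > 0`, then
`limsup_{x→∞} x^α P(X Y > x) ≤ M E[X^α]`. -/
theorem weak_breiman
    {Ω : Type*} [MeasurableSpace Ω] (μ : Measure Ω) [IsProbabilityMeasure μ]
    (X Y : Ω → ℝ) (hX_meas : Measurable X) (hY_meas : Measurable Y)
    (hX_nonneg : ∀ᵐ ω ∂μ, 0 ≤ X ω)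
    (hindep : IndepFun X Y μ)
    (α : ℝ) (hα : 0 < α) (M : ℝ) (hM : 0 < M)
    (hY_tail : limsup (fun x : ℝ => ENNReal.ofReal (x ^ α) * μ {ω | x < Y ω}) atTop
      < ENNReal.ofReal M)
    (hX_mom : ∃ ε : ℝ, 0 < ε ∧ Integrable (fun ω => X ω ^ (α + ε)) μ) :
    limsup (fun x : ℝ => ENNReal.ofReal (x ^ α) * μ {ω | x < X ω * Y ω}) atTop
      ≤ ENNReal.ofReal (M * ∫ ω, X ω ^ α ∂μ) := by
  obtain ⟨ε, hε, hXint⟩ := hX_mom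
  set ν : Measure ℝ := μ.map X with hν
  set ρ : Measure ℝ := μ.map Y with hρ
  have hνprob : IsProbabilityMeasure ν := Measure.isProbabilityMeasure_map hX_meas.aemeasurable
  have hρprob : IsProbabilityMeasure ρ := Measure.isProbabilityMeasure_map hY_meas.aemeasurable
  -- the product formula from independence
  have hprod : μ.map (fun ω => (X ω, Y ω)) = ν.prod ρ :=
    (indepFun_iff_map_prod_eq_prod_map_map hX_meas.aemeasurable hY_meas.aemeasurable).mp hindep
  have hSmeas : ∀ x : ℝ, MeasurableSet {p : ℝ × ℝ | x < p.1 * p.2} := fun x =>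
    measurableSet_lt measurable_const (measurable_fst.mul measurable_snd)
  have key : ∀ x : ℝ, μ {ω | x < X ω * Y ω} = ∫⁻ s, ρ {t | x < s * t} ∂ν := by
    intro x
    have h1 : μ {ω | x < X ω * Y ω}
        = μ.map (fun ω => (X ω, Y ω)) {p : ℝ × ℝ | x < p.1 * p.2} := by
      rw [Measure.map_apply (hX_meas.prodMk hY_meas) (hSmeas x)]
      rfl
    rw [h1, hprod, Measure.prod_apply (hSmeas x)]
    rfl
  -- tail bound for Y
  have hYev : ∀ᶠ x : ℝ in atTop,
      ENNReal.ofReal (x ^ α) * μ {ω | x < Y ω} < ENNReal.ofReal M :=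
    eventually_lt_of_limsup_lt hY_tail
  obtain ⟨x₁, hx₁⟩ := eventually_atTop.mp hYev
  set x₀ : ℝ := max x₁ 1 with hx₀def
  have hx₀pos : (0:ℝ) < x₀ := lt_of_lt_of_le one_pos (le_max_right _ _)
  have htail : ∀ y : ℝ, x₀ ≤ y → ENNReal.ofReal (y ^ α) * ρ {t | y < t} ≤ ENNReal.ofReal M := by
    intro y hy
    have h1 : {t : ℝ | y < t} = Set.Ioi y := rfl
    have : ρ {t | y < t} = μ {ω | y < Y ω} := by
      rw [h1, hρ, Measure.map_apply hY_meas measurableSet_Ioi]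
      rfl
    rw [this]
    exact (hx₁ y (le_trans (le_max_left _ _) hy)).le
  -- ν is supported on nonneg reals
  have hν_nonneg : ∀ᵐ s ∂ν, 0 ≤ s := by
    rw [hν]
    exact (ae_map_iff hX_meas.aemeasurable measurableSet_Ici).mpr hX_nonneg
  -- integrability of X^α
  have hXαint : Integrable (fun ω => X ω ^ α) μ := by
    refine Integrable.mono' ((integrable_const 1).add hXint)
      (((Real.continuous_rpow_const hα.le).measurable.comp hX_meas).aestronglyMeasurable) ?_
    filter_upwards [hX_nonneg] with ω hω
    simp only [Pi.add_apply, Function.comp_apply]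
    rw [Real.norm_eq_abs, abs_of_nonneg (Real.rpow_nonneg hω α)]
    rcases le_or_gt (X ω) 1 with h1 | h1
    · have : X ω ^ α ≤ 1 := Real.rpow_le_one hω h1 hα.le
      have h2 : (0:ℝ) ≤ X ω ^ (α + ε) := Real.rpow_nonneg hω _
      linarith
    · have : X ω ^ α ≤ X ω ^ (α + ε) :=
        Real.rpow_le_rpow_of_exponent_le h1.le (by linarith)
      linarith
  set Ireal : ℝ := ∫ ω, X ω ^ α ∂μ with hIreal
  set Creal : ℝ := ∫ ω, X ω ^ (α + ε) ∂μ with hCreal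
  have hIeq : ∫⁻ s, ENNReal.ofReal (s ^ α) ∂ν = ENNReal.ofReal Ireal := by
    rw [hν, lintegral_map ((Real.continuous_rpow_const (by linarith)).measurable.ennreal_ofReal) hX_meas]
    exact (ofReal_integral_eq_lintegral_ofReal hXαint
      (by filter_upwards [hX_nonneg] with ω hω using Real.rpow_nonneg hω α)).symm
  have hCeq : ∫⁻ s, ENNReal.ofReal (s ^ (α + ε)) ∂ν = ENNReal.ofReal Creal := by
    rw [hν, lintegral_map ((Real.continuous_rpow_const (by linarith)).measurable.ennreal_ofReal) hX_meas]
    exact (ofReal_integral_eq_lintegral_ofReal hXint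
      (by filter_upwards [hX_nonneg] with ω hω using Real.rpow_nonneg hω _)).symm
  -- main pointwise bound, for x > 0
  have main : ∀ x : ℝ, 0 < x →
      ENNReal.ofReal (x ^ α) * μ {ω | x < X ω * Y ω}
        ≤ ENNReal.ofReal M * ENNReal.ofReal Ireal
          + ENNReal.ofReal (x ^ α) * ν {s | x / x₀ < s} := by
    intro x hx
    have hmeasρ : Measurable fun s : ℝ => ρ {t | x < s * t} := by
      exact measurable_measure_prodMk_left (ν := ρ) (hSmeas x)
    rw [key x, ← lintegral_const_mul _ hmeasρ]
    have hbd : ∀ᵐ s ∂ν,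
        ENNReal.ofReal (x ^ α) * ρ {t | x < s * t}
          ≤ ENNReal.ofReal M * ENNReal.ofReal (s ^ α)
            + Set.indicator {u : ℝ | x / x₀ < u} (fun _ => ENNReal.ofReal (x ^ α)) s := by
      filter_upwards [hν_nonneg] with s hs
      rcases eq_or_lt_of_le hs with hs0 | hs0
      · have : {t : ℝ | x < s * t} = ∅ := by
          ext t; simp [← hs0, hx.not_gt, not_lt.mpr hx.le]
        simp [this]
      · have hset : {t : ℝ | x < s * t} = {t : ℝ | x / s < t} := by
          ext t
          simp only [Set.mem_setOf_eq, div_lt_iff₀ hs0]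
          constructor <;> intro h <;> linarith [mul_comm s t]
        rw [hset]
        rcases le_or_gt s (x / x₀) with hcase | hcase
        · -- x / s ≥ x₀ : use the tail bound
          have hxs : x₀ ≤ x / s := by
            rw [le_div_iff₀ hs0]
            calc x₀ * s ≤ x₀ * (x / x₀) := by
                  exact mul_le_mul_of_nonneg_left hcase hx₀pos.le
              _ = x := by field_simp
          have hxα : ENNReal.ofReal (x ^ α)
              = ENNReal.ofReal (s ^ α) * ENNReal.ofReal ((x / s) ^ α) := by
            rw [← ENNReal.ofReal_mul (Real.rpow_nonneg hs0.le α),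
              ← Real.mul_rpow hs0.le (div_nonneg hx.le hs0.le), mul_div_cancel₀ _ hs0.ne']
          calc ENNReal.ofReal (x ^ α) * ρ {t | x / s < t}
              = ENNReal.ofReal (s ^ α) * (ENNReal.ofReal ((x / s) ^ α) * ρ {t | x / s < t}) := by
                rw [hxα, mul_assoc]
            _ ≤ ENNReal.ofReal (s ^ α) * ENNReal.ofReal M :=
                mul_le_mul_right (htail _ hxs) _
            _ = ENNReal.ofReal M * ENNReal.ofReal (s ^ α) := mul_comm _ _
            _ ≤ _ := le_add_of_nonneg_right zero_le
        · -- s > x / x₀ : use indicator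
          have hind : Set.indicator {u : ℝ | x / x₀ < u} (fun _ => ENNReal.ofReal (x ^ α)) s
              = ENNReal.ofReal (x ^ α) := Set.indicator_of_mem hcase _
          calc ENNReal.ofReal (x ^ α) * ρ {t | x / s < t}
              ≤ ENNReal.ofReal (x ^ α) * 1 := mul_le_mul_right prob_le_one _
            _ = ENNReal.ofReal (x ^ α) := mul_one _
            _ ≤ _ := by rw [hind]; exact le_add_of_nonneg_left zero_le
    calc ∫⁻ s, ENNReal.ofReal (x ^ α) * ρ {t | x < s * t} ∂ν
        ≤ ∫⁻ s, (ENNReal.ofReal M * ENNReal.ofReal (s ^ α)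
            + Set.indicator {u : ℝ | x / x₀ < u} (fun _ => ENNReal.ofReal (x ^ α)) s) ∂ν :=
          lintegral_mono_ae hbd
      _ = ENNReal.ofReal M * ENNReal.ofReal Ireal
          + ENNReal.ofReal (x ^ α) * ν {s | x / x₀ < s} := by
          rw [lintegral_add_left (((Real.continuous_rpow_const (by linarith)).measurable.ennreal_ofReal).const_mul _),
            lintegral_const_mul _ ((Real.continuous_rpow_const (by linarith)).measurable.ennreal_ofReal), hIeq,
            lintegral_indicator_const
              (show MeasurableSet {u : ℝ | x / x₀ < u} from measurableSet_Ioi)]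
  -- the error term tends to 0
  set err : ℝ → ℝ≥0∞ := fun x => ENNReal.ofReal (x ^ α) * ν {s | x / x₀ < s} with herr
  have herr0 : Tendsto err atTop (𝓝 0) := by
    set g : ℝ → ℝ≥0∞ := fun x => ENNReal.ofReal (Creal * x₀ ^ (α + ε) * x ^ (-ε)) with hg
    have hle : ∀ᶠ x : ℝ in atTop, err x ≤ g x := by
      filter_upwards [eventually_gt_atTop (0:ℝ)] with x hx
      have hd : (0:ℝ) < (x / x₀) ^ (α + ε) :=
        Real.rpow_pos_of_pos (div_pos hx hx₀pos) _
      have hmar : ν {s | x / x₀ < s}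
          ≤ ENNReal.ofReal Creal / ENNReal.ofReal ((x / x₀) ^ (α + ε)) := by
        rw [ENNReal.le_div_iff_mul_le
          (Or.inl (by simpa [ENNReal.ofReal_eq_zero, not_le] using hd))
          (Or.inl ENNReal.ofReal_ne_top), mul_comm]
        calc ENNReal.ofReal ((x / x₀) ^ (α + ε)) * ν {s | x / x₀ < s}
            ≤ ENNReal.ofReal ((x / x₀) ^ (α + ε))
              * ν {s | ENNReal.ofReal ((x / x₀) ^ (α + ε)) ≤ ENNReal.ofReal (s ^ (α + ε))} := by
              refine mul_le_mul_right (measure_mono ?_) _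
              intro s hs'
              exact ENNReal.ofReal_le_ofReal
                (Real.rpow_le_rpow (div_nonneg hx.le hx₀pos.le) (le_of_lt hs') (by linarith))
          _ ≤ ∫⁻ s, ENNReal.ofReal (s ^ (α + ε)) ∂ν :=
              mul_meas_ge_le_lintegral₀
                (((Real.continuous_rpow_const (by linarith)).measurable.ennreal_ofReal).aemeasurable) _
          _ = ENNReal.ofReal Creal := hCeq
      calc err x ≤ ENNReal.ofReal (x ^ α)
            * (ENNReal.ofReal Creal / ENNReal.ofReal ((x / x₀) ^ (α + ε))) :=
            mul_le_mul_right hmar _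
        _ = ENNReal.ofReal (x ^ α * Creal / (x / x₀) ^ (α + ε)) := by
            rw [ENNReal.ofReal_div_of_pos hd, ENNReal.ofReal_mul (Real.rpow_nonneg hx.le α),
              mul_div_assoc]
        _ ≤ g x := by
            apply ENNReal.ofReal_le_ofReal
            have hxpow : x ^ α / x ^ (α + ε) = x ^ (-ε) := by
              rw [← Real.rpow_sub hx]; ring_nf
            have heq : x ^ α * Creal / (x / x₀) ^ (α + ε)
                = Creal * x₀ ^ (α + ε) * x ^ (-ε) := by
              rw [Real.div_rpow hx.le hx₀pos.le, div_div_eq_mul_div, ← hxpow]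
              have hne : x ^ (α + ε) ≠ 0 := (Real.rpow_pos_of_pos hx _).ne'
              field_simp
            exact heq.le
    have hgto : Tendsto g atTop (𝓝 0) := by
      have h1 : Tendsto (fun x : ℝ => Creal * x₀ ^ (α + ε) * x ^ (-ε)) atTop (𝓝 0) := by
        have := (tendsto_rpow_neg_atTop hε).const_mul (Creal * x₀ ^ (α + ε))
        simpa using this
      have := (ENNReal.continuous_ofReal.tendsto 0).comp h1
      rw [ENNReal.ofReal_zero] at this; exact this
    exact tendsto_of_tendsto_of_tendsto_of_le_of_le' tendsto_const_nhds hgto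
      (Eventually.of_forall fun x => zero_le) hle
  -- conclude
  have hub : ∀ᶠ x : ℝ in atTop,
      ENNReal.ofReal (x ^ α) * μ {ω | x < X ω * Y ω}
        ≤ ENNReal.ofReal M * ENNReal.ofReal Ireal + err x := by
    filter_upwards [eventually_gt_atTop (0:ℝ)] with x hx
    exact main x hx
  have hlim : Tendsto (fun x => ENNReal.ofReal M * ENNReal.ofReal Ireal + err x) atTop
      (𝓝 (ENNReal.ofReal M * ENNReal.ofReal Ireal)) := by
    have := (tendsto_const_nhds (x := ENNReal.ofReal M * ENNReal.ofReal Ireal)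
      (f := atTop (α := ℝ))).add herr0
    simpa using this
  calc limsup (fun x : ℝ => ENNReal.ofReal (x ^ α) * μ {ω | x < X ω * Y ω}) atTop
      ≤ limsup (fun x => ENNReal.ofReal M * ENNReal.ofReal Ireal + err x) atTop :=
        limsup_le_limsup hub
    _ = ENNReal.ofReal M * ENNReal.ofReal Ireal := hlim.limsup_eq
    _ = ENNReal.ofReal (M * Ireal) := (ENNReal.ofReal_mul hM.le).symm
end
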